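/- arXiv:0901.2561 — 11 statements merged into one kernel-verified Lean document; each statement's English description precedes it below -/
import Mathlib

section
/- Every free group is residually nilpotent; that is, if F(S) is the free group on a set S, then the intersection over all k ≥ 1 of the terms γ_k(F(S)) of the lower central series is the trivial subgroup. -/
namespace MagnusAux

variable {A : Type*} [Ring A] (f : ℕ → AddSubgroup A)

/-- Filtration hypothesis: `f i * f j ⊆ f (i+j)` and `f` antitone. -/
structure IsFilt : Prop where
  mul_mem : ∀ {i j : ℕ} {a b : A}, a ∈ f i → b ∈ f j → a * b ∈ f (i + j)
  anti : ∀ {i j : ℕ}, i ≤ j → f j ≤ f i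

variable {f}

/-- Units congruent to 1 modulo `f k` (together with their inverses). -/
def UF (hf : IsFilt f) (k : ℕ) : Subgroup Aˣ where
  carrier := {u : Aˣ | ((u : A) - 1 ∈ f k) ∧ (((u⁻¹ : Aˣ) : A) - 1 ∈ f k)}
  one_mem' := by simp [AddSubgroup.zero_mem]
  mul_mem' := by
    rintro u v ⟨hu, hu'⟩ ⟨hv, hv'⟩
    constructor
    · have : ((u * v : Aˣ) : A) - 1 = ((u : A) - 1) * ((v : A) - 1) + (((u : A) - 1) + ((v : A) - 1)) := by
        push_cast; noncomm_ring
      rw [this]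
      exact AddSubgroup.add_mem _ (hf.anti (Nat.le_add_left k k) (hf.mul_mem hu hv))
        (AddSubgroup.add_mem _ hu hv)
    · have : (((u * v)⁻¹ : Aˣ) : A) - 1 = (((v⁻¹ : Aˣ) : A) - 1) * (((u⁻¹ : Aˣ) : A) - 1)
          + ((((v⁻¹ : Aˣ) : A) - 1) + (((u⁻¹ : Aˣ) : A) - 1)) := by
        rw [mul_inv_rev]; push_cast; noncomm_ring
      rw [this]
      exact AddSubgroup.add_mem _ (hf.anti (Nat.le_add_left k k) (hf.mul_mem hv' hu'))
        (AddSubgroup.add_mem _ hv' hu')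
  inv_mem' := by
    rintro u ⟨hu, hu'⟩
    exact ⟨hu', by simpa using hu⟩

theorem UF_anti (hf : IsFilt f) {i j : ℕ} (h : i ≤ j) : UF hf j ≤ UF hf i := by
  rintro u ⟨h1, h2⟩; exact ⟨hf.anti h h1, hf.anti h h2⟩

theorem commutator_val_mem (hf : IsFilt f) {i j : ℕ} {u v : Aˣ}
    (hu : u ∈ UF hf i) (hv : v ∈ UF hf j) :
    ((u * v * u⁻¹ * v⁻¹ : Aˣ) : A) - 1 ∈ f (i + j) := by
  obtain ⟨hu1, hu2⟩ := hu
  obtain ⟨hv1, hv2⟩ := hv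
  set a : A := (u : A) - 1 with ha
  set b : A := (v : A) - 1 with hb
  -- u v u⁻¹ v⁻¹ - 1 = (ab - ba) * (u⁻¹ v⁻¹)
  have key : ((u * v * u⁻¹ * v⁻¹ : Aˣ) : A) - 1
      = (a * b - b * a) * (((u⁻¹ : Aˣ) : A) * ((v⁻¹ : Aˣ) : A)) := by
    have huu : (u : A) * ((u⁻¹ : Aˣ) : A) = 1 := by
      rw [← Units.val_mul, mul_inv_cancel, Units.val_one]
    have hvv : (v : A) * ((v⁻¹ : Aˣ) : A) = 1 := by
      rw [← Units.val_mul, mul_inv_cancel, Units.val_one]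
    have expand : (u : A) * (v : A) - (v : A) * (u : A) = a * b - b * a := by
      rw [ha, hb]; noncomm_ring
    push_cast
    calc (u : A) * (v : A) * ((u⁻¹ : Aˣ) : A) * ((v⁻¹ : Aˣ) : A) - 1
        = ((u : A) * (v : A) - (v : A) * (u : A)) * (((u⁻¹ : Aˣ) : A) * ((v⁻¹ : Aˣ) : A))
          + (v : A) * ((u : A) * ((u⁻¹ : Aˣ) : A)) * ((v⁻¹ : Aˣ) : A) - 1 := by noncomm_ring
      _ = (a * b - b * a) * (((u⁻¹ : Aˣ) : A) * ((v⁻¹ : Aˣ) : A)) := by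
          rw [huu, mul_one, hvv, expand]; noncomm_ring
  rw [key]
  have hab : a * b - b * a ∈ f (i + j) := by
    refine AddSubgroup.sub_mem _ (hf.mul_mem hu1 hv1) ?_
    rw [Nat.add_comm i j]; exact hf.mul_mem hv1 hu1
  -- u⁻¹ v⁻¹ = 1 + d with d ∈ f 0
  have hd : ((u⁻¹ : Aˣ) : A) * ((v⁻¹ : Aˣ) : A) - 1 ∈ f 0 := by
    have : ((u⁻¹ : Aˣ) : A) * ((v⁻¹ : Aˣ) : A) - 1
        = (((u⁻¹ : Aˣ) : A) - 1) * (((v⁻¹ : Aˣ) : A) - 1)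
          + ((((u⁻¹ : Aˣ) : A) - 1) + (((v⁻¹ : Aˣ) : A) - 1)) := by noncomm_ring
    rw [this]
    exact AddSubgroup.add_mem _ (hf.anti (Nat.zero_le _) (hf.mul_mem hu2 hv2))
      (AddSubgroup.add_mem _ (hf.anti (Nat.zero_le _) hu2) (hf.anti (Nat.zero_le _) hv2))
  have : (a * b - b * a) * (((u⁻¹ : Aˣ) : A) * ((v⁻¹ : Aˣ) : A))
      = (a * b - b * a) * ((((u⁻¹ : Aˣ) : A) * ((v⁻¹ : Aˣ) : A)) - 1) + (a * b - b * a) := by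
    noncomm_ring
  rw [this]
  exact AddSubgroup.add_mem _ (by simpa using hf.mul_mem hab hd) hab

open scoped commutatorElement in
theorem commutator_mem (hf : IsFilt f) {i j : ℕ} {u v : Aˣ}
    (hu : u ∈ UF hf i) (hv : v ∈ UF hf j) : ⁅u, v⁆ ∈ UF hf (i + j) := by
  constructor
  · simpa [commutatorElement_def] using commutator_val_mem hf hu hv
  · rw [commutatorElement_inv]
    have := commutator_val_mem hf hv hu
    rw [Nat.add_comm j i] at this
    simpa [commutatorElement_def] using this

/-- Lower central series of `UF hf 1` is controlled by the filtration. -/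
theorem lcs_le (hf : IsFilt f) (k : ℕ) :
    (⊤ : Subgroup (UF hf 1)).lowerCentralSeries k ≤ (UF hf (k + 1)).subgroupOf (UF hf 1) := by
  induction k with
  | zero =>
    intro x _
    exact x.2
  | succ k ih =>
    rw [Subgroup.lowerCentralSeries_succ, Subgroup.commutator_def, Subgroup.closure_le]
    rintro x ⟨p, hp, q, -, rfl⟩
    have hp' : (p : Aˣ) ∈ UF hf (k + 1) := ih hp
    have hq' : (q : Aˣ) ∈ UF hf 1 := q.2
    have := commutator_mem hf hp' hq'
    show ((p * q * p⁻¹ * q⁻¹ : UF hf 1) : Aˣ) ∈ UF hf (k + 1 + 1)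
    push_cast
    simpa [commutatorElement_def] using this



section Matrices

variable (n : ℕ)

/-- Strictly-lower-triangular depth filtration on integer matrices. -/
def filt (k : ℕ) : AddSubgroup (Matrix (Fin (n + 1)) (Fin (n + 1)) ℤ) where
  carrier := {m | ∀ i j : Fin (n + 1), (i : ℕ) < (j : ℕ) + k → m i j = 0}
  zero_mem' := fun _ _ _ => rfl
  add_mem' := by
    intro a b ha hb i j hij
    simp only [Matrix.add_apply, ha i j hij, hb i j hij, add_zero]
  neg_mem' := by
    intro a ha i j hij
    simp only [Set.mem_setOf_eq] at ha ⊢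
    simp [Matrix.neg_apply, ha i j hij]

theorem isFilt_filt : IsFilt (filt n) where
  mul_mem := by
    intro i j a b ha hb p q hpq
    rw [Matrix.mul_apply]
    refine Finset.sum_eq_zero fun c _ => ?_
    by_cases h : (p : ℕ) < (c : ℕ) + i
    · rw [ha p c h, zero_mul]
    · rw [hb c q (by omega), mul_zero]
  anti := by
    intro i j hij a ha p q hpq
    exact ha p q (by omega)

theorem filt_last : filt n (n + 1) = ⊥ := by
  rw [eq_bot_iff]
  intro a ha
  ext i j
  exact ha i j (by omega)

theorem one_mem_filt_zero : (1 : Matrix (Fin (n + 1)) (Fin (n + 1)) ℤ) ∈ filt n 0 := by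
  intro i j hij
  rw [Matrix.one_apply_ne]
  intro h
  rw [h] at hij
  omega

theorem pow_mem_filt {x : Matrix (Fin (n + 1)) (Fin (n + 1)) ℤ} (hx : x ∈ filt n 1) (k : ℕ) :
    x ^ k ∈ filt n k := by
  induction k with
  | zero => simpa using one_mem_filt_zero n
  | succ k ih =>
    rw [pow_succ]
    have := (isFilt_filt n).mul_mem ih hx
    exact this

end Matrices

section Word

variable {S : Type*} [DecidableEq S] (R : List (S × Bool))

/-- The raising matrix for the letter `y`, relative to the word `R`. -/
def NM (y : S) : Matrix (Fin (R.length + 1)) (Fin (R.length + 1)) ℤ :=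
  Matrix.of fun i j =>
    if (i : ℕ) = (j : ℕ) + 1 ∧ (R[(j : ℕ)]?).map Prod.fst = some y then 1 else 0

theorem NM_mem_filt (y : S) : NM R y ∈ filt R.length 1 := by
  intro i j hij
  simp only [NM, Matrix.of_apply]
  rw [if_neg]
  rintro ⟨h1, -⟩
  omega

theorem NM_pow_eq_zero (y : S) : NM R y ^ (R.length + 1) = 0 := by
  have := pow_mem_filt R.length (NM_mem_filt R y) (R.length + 1)
  rwa [filt_last, AddSubgroup.mem_bot] at this

/-- The unit `1 + N_y`. -/
def MU (y : S) : (Matrix (Fin (R.length + 1)) (Fin (R.length + 1)) ℤ)ˣ where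
  val := 1 + NM R y
  inv := ∑ k ∈ Finset.range (R.length + 1), (-NM R y) ^ k
  val_inv := by
    have h := mul_geom_sum (-NM R y) (R.length + 1)
    have hz : (-NM R y) ^ (R.length + 1) = 0 := by
      rw [neg_pow, NM_pow_eq_zero, mul_zero]
    rw [hz] at h
    have : (1 + NM R y) = -(-NM R y - 1) := by abel
    rw [this, neg_mul, h]
    abel
  inv_val := by
    have h := geom_sum_mul (-NM R y) (R.length + 1)
    have hz : (-NM R y) ^ (R.length + 1) = 0 := by
      rw [neg_pow, NM_pow_eq_zero, mul_zero]
    rw [hz] at h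
    have : (1 + NM R y) = -(-NM R y - 1) := by abel
    rw [this, mul_neg, h]
    abel

theorem MU_mem_UF (y : S) : MU R y ∈ UF (isFilt_filt R.length) 1 := by
  constructor
  · show (1 + NM R y) - 1 ∈ filt R.length 1
    simpa using NM_mem_filt R y
  · show (∑ k ∈ Finset.range (R.length + 1), (-NM R y) ^ k) - 1 ∈ filt R.length 1
    rw [Finset.sum_range_succ' (fun k => (-NM R y) ^ k), pow_zero, add_sub_cancel_right]
    refine AddSubgroup.sum_mem _ fun k _ => ?_
    have : (-NM R y) ^ (k + 1) ∈ filt R.length (k + 1) :=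
      pow_mem_filt R.length (AddSubgroup.neg_mem _ (NM_mem_filt R y)) (k + 1)
    exact (isFilt_filt R.length).anti (by omega) this

end Word

section Vec

open scoped Matrix

variable {S : Type*} [DecidableEq S] (R : List (S × Bool))

theorem NM_mulVec (y : S) (u : Fin (R.length + 1) → ℤ) (i : Fin (R.length + 1)) :
    (NM R y *ᵥ u) i =
      if h : 0 < (i : ℕ) ∧ (R[(i : ℕ) - 1]?).map Prod.fst = some y
      then u ⟨(i : ℕ) - 1, by omega⟩ else 0 := by
  rw [Matrix.mulVec, dotProduct]
  by_cases h : 0 < (i : ℕ) ∧ (R[(i : ℕ) - 1]?).map Prod.fst = some y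
  · rw [dif_pos h]
    rw [Finset.sum_eq_single (⟨(i : ℕ) - 1, by omega⟩ : Fin (R.length + 1))]
    · simp only [NM, Matrix.of_apply]
      rw [if_pos ⟨by omega, h.2⟩, one_mul]
    · intro j _ hj
      simp only [NM, Matrix.of_apply]
      rw [if_neg, zero_mul]
      rintro ⟨h1, -⟩
      apply hj
      apply Fin.ext
      show (j : ℕ) = (i : ℕ) - 1
      omega
    · intro hmem
      exact absurd (Finset.mem_univ _) hmem
  · rw [dif_neg h]
    refine Finset.sum_eq_zero fun j _ => ?_
    simp only [NM, Matrix.of_apply]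
    rw [if_neg, zero_mul]
    rintro ⟨h1, h2⟩
    exact h ⟨by omega, by
      have : (j : ℕ) = (i : ℕ) - 1 := by omega
      rwa [← this]⟩

/-- Entry formula for the positive step. -/
theorem MU_mulVec (y : S) (u : Fin (R.length + 1) → ℤ) (i : Fin (R.length + 1)) :
    ((MU R y : Matrix (Fin (R.length + 1)) (Fin (R.length + 1)) ℤ) *ᵥ u) i =
      u i + (if h : 0 < (i : ℕ) ∧ (R[(i : ℕ) - 1]?).map Prod.fst = some y
      then u ⟨(i : ℕ) - 1, by omega⟩ else 0) := by
  show ((1 + NM R y) *ᵥ u) i = _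
  rw [Matrix.add_mulVec, Matrix.one_mulVec]
  simp only [Pi.add_apply, NM_mulVec]

/-- The inverse step composed with the positive step gives back `u`. -/
theorem MU_mulVec_MUinv (y : S) (u : Fin (R.length + 1) → ℤ) :
    (MU R y : Matrix (Fin (R.length + 1)) (Fin (R.length + 1)) ℤ) *ᵥ
      ((((MU R y)⁻¹ : (Matrix (Fin (R.length + 1)) (Fin (R.length + 1)) ℤ)ˣ) :
        Matrix (Fin (R.length + 1)) (Fin (R.length + 1)) ℤ) *ᵥ u) = u := by
  rw [Matrix.mulVec_mulVec, ← Units.val_mul, mul_inv_cancel, Units.val_one, Matrix.one_mulVec]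

/-- One step of the action of the word `R`. -/
def stepM (a : S × Bool) : Matrix (Fin (R.length + 1)) (Fin (R.length + 1)) ℤ :=
  if a.2 then (MU R a.1 : Matrix (Fin (R.length + 1)) (Fin (R.length + 1)) ℤ)
  else (((MU R a.1)⁻¹ : (Matrix (Fin (R.length + 1)) (Fin (R.length + 1)) ℤ)ˣ) :
    Matrix (Fin (R.length + 1)) (Fin (R.length + 1)) ℤ)

/-- Action of a list of letters (first letter acts first). -/
def runW (l : List (S × Bool)) (u : Fin (R.length + 1) → ℤ) : Fin (R.length + 1) → ℤ :=
  l.foldl (fun v a => stepM R a *ᵥ v) u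

theorem runW_nil (u : Fin (R.length + 1) → ℤ) : runW R [] u = u := rfl

theorem runW_append (l l' : List (S × Bool)) (u : Fin (R.length + 1) → ℤ) :
    runW R (l ++ l') u = runW R l' (runW R l u) :=
  List.foldl_append

theorem runW_replicate (L : ℕ) (a : S × Bool) (u : Fin (R.length + 1) → ℤ) :
    runW R (List.replicate L a) u = (fun v => stepM R a *ᵥ v)^[L] u := by
  induction L generalizing u with
  | zero => rfl
  | succ L ih =>
    rw [List.replicate_succ, Function.iterate_succ_apply]
    exact ih _

/-- The bridge: the product of unit images acting on `u` equals `runW` of the reversed list. -/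
theorem prod_mulVec (l : List (S × Bool)) (u : Fin (R.length + 1) → ℤ) :
    (((l.map fun a => bif a.2 then MU R a.1 else (MU R a.1)⁻¹).prod :
        (Matrix (Fin (R.length + 1)) (Fin (R.length + 1)) ℤ)ˣ) :
      Matrix (Fin (R.length + 1)) (Fin (R.length + 1)) ℤ) *ᵥ u = runW R l.reverse u := by
  induction l generalizing u with
  | nil => simp [runW_nil, Matrix.one_mulVec]
  | cons a l ih =>
    rw [List.map_cons, List.prod_cons, List.reverse_cons, runW_append, Units.val_mul,
      ← Matrix.mulVec_mulVec, ih]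
    show _ = stepM R a *ᵥ _
    cases ha : a.2 <;> simp [stepM, ha]

end Vec



section AbstractRun

/-- Abstract positive run lemma over integer sequences. -/
theorem abs_run_pos (c : ℕ → Prop) [DecidablePred c] (B L : ℕ) (w : ℕ → ℕ → ℤ) (σ : ℤ)
    (hrec : ∀ m i, w (m + 1) i = w m i + (if c i then w m (i - 1) else 0))
    (hcB : ¬ c B) (hc : ∀ j, 1 ≤ j → j ≤ L → c (B + j))
    (hsupp : ∀ i, B < i → w 0 i = 0) (hB : 0 < σ * w 0 B) :
    (∀ i, B + L < i → w L i = 0) ∧ 0 < σ * w L (B + L) := by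
  have key : ∀ m, m ≤ L →
      (∀ i, B + m < i → w m i = 0) ∧
      (∀ j, j ≤ L → 0 ≤ σ * w m (B + j)) ∧
      0 < σ * w m (B + m) := by
    intro m
    induction m with
    | zero =>
      intro _
      refine ⟨fun i hi => hsupp i (by omega), fun j hj => ?_, by simpa using hB⟩
      rcases Nat.eq_zero_or_pos j with rfl | hj0
      · simpa using le_of_lt hB
      · rw [hsupp (B + j) (by omega), mul_zero]
    | succ m ih =>
      intro hm
      obtain ⟨ha, hsg, hst⟩ := ih (by omega)
      have hsign : ∀ j, j ≤ L → 0 ≤ σ * w (m + 1) (B + j) := by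
        intro j hj
        rw [hrec]
        rcases Nat.eq_zero_or_pos j with rfl | hj0
        · rw [if_neg (by simpa using hcB)]
          simpa using hsg 0 (by omega)
        · rw [if_pos (hc j hj0 hj), show B + j - 1 = B + (j - 1) by omega, mul_add]
          exact add_nonneg (hsg j hj) (hsg (j - 1) (by omega))
      refine ⟨?_, hsign, ?_⟩
      · intro i hi
        rw [hrec, ha i (by omega)]
        by_cases hco : c i
        · rw [if_pos hco, ha (i - 1) (by omega)]; simp
        · rw [if_neg hco]; simp
      · rw [hrec, if_pos (hc (m + 1) (by omega) hm), ha (B + (m + 1)) (by omega),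
          show B + (m + 1) - 1 = B + m by omega, zero_add]
        exact hst
  obtain ⟨ha, -, hc'⟩ := key L le_rfl
  exact ⟨ha, hc'⟩

/-- Abstract negative (inverse) run lemma over integer sequences. -/
theorem abs_run_neg (c : ℕ → Prop) [DecidablePred c] (B L : ℕ) (w : ℕ → ℕ → ℤ) (σ : ℤ)
    (hrec : ∀ m i, w m i = w (m + 1) i + (if c i then w (m + 1) (i - 1) else 0))
    (hcB : ¬ c B) (hc : ∀ j, 1 ≤ j → j ≤ L → c (B + j)) (hchi : ¬ c (B + L + 1))
    (hsupp : ∀ i, B < i → w 0 i = 0) (hB : 0 < σ * w 0 B) :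
    (∀ i, B + L < i → w L i = 0) ∧ 0 < σ * (-1) ^ L * w L (B + L) := by
  set cc : ℤ := w 0 B with hcc
  -- invariant propagated along steps
  have step : ∀ m,
      ((∀ i, B + L < i → w m i = 0) ∧ (∀ j, j ≤ L → 0 ≤ σ * (-1) ^ j * w m (B + j)) ∧
        w m B = cc) →
      ((∀ i, B + L < i → w (m + 1) i = 0) ∧
        (∀ j, j ≤ L → σ * cc ≤ σ * (-1) ^ j * w (m + 1) (B + j)) ∧
        w (m + 1) B = cc) := by
    intro m ⟨ha, hsg, hB'⟩
    have hwB : w (m + 1) B = cc := by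
      have := hrec m B
      rw [if_neg hcB, add_zero] at this
      rw [← this, hB']
    have hsupp' : ∀ i, B + L < i → w (m + 1) i = 0 := by
      intro i
      induction i using Nat.strong_induction_on with
      | _ i ih2 =>
        intro hi
        have := hrec m i
        rw [ha i hi] at this
        by_cases hco : c i
        · rw [if_pos hco] at this
          rcases Nat.eq_or_lt_of_le hi with he | hlt
          · rw [← he] at hco
            exact absurd hco hchi
          · have h0 : w (m + 1) (i - 1) = 0 := ih2 (i - 1) (by omega) (by omega)
            rw [h0, add_zero] at this
            omega
        · rw [if_neg hco, add_zero] at this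
          omega
    have hmono : ∀ j, j ≤ L → σ * cc ≤ σ * (-1) ^ j * w (m + 1) (B + j) := by
      intro j
      induction j with
      | zero =>
        intro _
        simpa [hwB] using le_refl (σ * cc)
      | succ j ihj =>
        intro hj
        have hrj := hrec m (B + (j + 1))
        rw [if_pos (hc (j + 1) (by omega) hj), show B + (j + 1) - 1 = B + j by omega] at hrj
        have h1 : 0 ≤ σ * (-1) ^ (j + 1) * w m (B + (j + 1)) := hsg (j + 1) hj
        have h2 : σ * cc ≤ σ * (-1) ^ j * w (m + 1) (B + j) := ihj (by omega)
        have hpow : ((-1 : ℤ)) ^ (j + 1) = -(-1 : ℤ) ^ j := by rw [pow_succ]; ring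
        rw [hpow] at h1 ⊢
        have expand : σ * -(-1 : ℤ) ^ j * w (m + 1) (B + (j + 1)) =
            σ * -(-1 : ℤ) ^ j * w m (B + (j + 1)) + σ * (-1 : ℤ) ^ j * w (m + 1) (B + j) := by
          rw [hrj]; ring
        linarith [h1, h2, expand]
    exact ⟨hsupp', hmono, hwB⟩
  have inv : ∀ m, (∀ i, B + L < i → w m i = 0) ∧
      (∀ j, j ≤ L → 0 ≤ σ * (-1) ^ j * w m (B + j)) ∧ w m B = cc := by
    intro m
    induction m with
    | zero =>
      refine ⟨fun i hi => hsupp i (by omega), fun j hj => ?_, rfl⟩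
      rcases Nat.eq_zero_or_pos j with rfl | hj0
      · simpa using le_of_lt hB
      · rw [hsupp (B + j) (by omega), mul_zero]
    | succ m ih =>
      obtain ⟨h1, h2, h3⟩ := step m ih
      exact ⟨h1, fun j hj => le_trans (le_of_lt hB) (h2 j hj), h3⟩
  rcases Nat.eq_zero_or_pos L with rfl | hL
  · exact ⟨fun i hi => hsupp i (by omega), by simpa using hB⟩
  · obtain ⟨h1, h2, -⟩ := step (L - 1) (inv (L - 1))
    rw [show L - 1 + 1 = L by omega] at h1 h2
    exact ⟨h1, lt_of_lt_of_le hB (h2 L le_rfl)⟩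

end AbstractRun

section Inst

open scoped Matrix

variable {S : Type*} [DecidableEq S] (R : List (S × Bool))

theorem mapfst_eq (l : List (S × Bool)) (m : ℕ) (y : S) :
    (l[m]?).map Prod.fst = some y ↔ ∃ c, l[m]? = some (y, c) := by
  cases h : l[m]? with
  | none => simp
  | some p =>
    cases p with
    | mk p1 p2 =>
      simp only [Option.map_some, Option.some.injEq, Prod.mk.injEq]
      constructor
      · rintro rfl; exact ⟨p2, ⟨rfl, rfl⟩⟩
      · rintro ⟨c, hc, -⟩; exact hc

theorem cond_in_run {y : S} {b : Bool} {B L : ℕ}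
    (hrun : ∀ t, t < L → R[B + t]? = some (y, b)) {j : ℕ} (h1 : 1 ≤ j) (hj : j ≤ L) :
    (R[B + j - 1]?).map Prod.fst = some y := by
  have := hrun (j - 1) (by omega)
  rw [show B + j - 1 = B + (j - 1) by omega, this]
  rfl

/-- Extension of a vector by zero. -/
def extv (u : Fin (R.length + 1) → ℤ) : ℕ → ℤ :=
  fun i => if h : i ≤ R.length then u ⟨i, by omega⟩ else 0

/-- Raising condition at index `i` (1-based positions). -/
def condy (y : S) (i : ℕ) : Prop :=
  0 < i ∧ i ≤ R.length ∧ (R[i - 1]?).map Prod.fst = some y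

instance (y : S) : DecidablePred (condy R y) := fun _ => by
  unfold condy; infer_instance

theorem extv_rec_pos (y : S) (v : Fin (R.length + 1) → ℤ) (i : ℕ) :
    extv R ((MU R y : Matrix (Fin (R.length + 1)) (Fin (R.length + 1)) ℤ) *ᵥ v) i =
      extv R v i + (if condy R y i then extv R v (i - 1) else 0) := by
  by_cases h : i ≤ R.length
  · rw [extv, dif_pos h]
    rw [MU_mulVec R y v ⟨i, by omega⟩]
    congr 1
    · rw [extv, dif_pos h]
    by_cases hc : 0 < i ∧ (R[i - 1]?).map Prod.fst = some y
    · rw [dif_pos hc, if_pos ⟨hc.1, h, hc.2⟩, extv, dif_pos (by omega : i - 1 ≤ R.length)]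
    · rw [dif_neg hc, if_neg (by rintro ⟨h1, h2, h3⟩; exact hc ⟨h1, h3⟩)]
  · rw [extv, dif_neg h, extv, dif_neg h, if_neg (by rintro ⟨h1, h2, h3⟩; omega)]
    simp

theorem extv_rec_neg (y : S) (v : Fin (R.length + 1) → ℤ) (i : ℕ) :
    extv R v i =
      extv R ((((MU R y)⁻¹ : (Matrix (Fin (R.length + 1)) (Fin (R.length + 1)) ℤ)ˣ) :
        Matrix (Fin (R.length + 1)) (Fin (R.length + 1)) ℤ) *ᵥ v) i +
      (if condy R y i then
        extv R ((((MU R y)⁻¹ : (Matrix (Fin (R.length + 1)) (Fin (R.length + 1)) ℤ)ˣ) :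
          Matrix (Fin (R.length + 1)) (Fin (R.length + 1)) ℤ) *ᵥ v) (i - 1) else 0) := by
  conv_lhs => rw [← MU_mulVec_MUinv R y v]
  exact extv_rec_pos R y _ i

/-- The full run lemma at the matrix level. -/
theorem run_matrix (y : S) (b : Bool) (B L : ℕ) (hBL : B + L ≤ R.length) (hL : 1 ≤ L)
    (hrun : ∀ t, t < L → R[B + t]? = some (y, b))
    (hlo : ∀ c : Bool, B ≠ 0 → R[B - 1]? ≠ some (y, c))
    (hhi : ∀ c : Bool, R[B + L]? ≠ some (y, c))
    (u : Fin (R.length + 1) → ℤ)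
    (hsupp : ∀ i : Fin (R.length + 1), B < (i : ℕ) → u i = 0)
    (huB : u ⟨B, by omega⟩ ≠ 0) :
    (∀ i : Fin (R.length + 1), B + L < (i : ℕ) →
      ((fun v => stepM R (y, b) *ᵥ v)^[L] u) i = 0) ∧
    ((fun v => stepM R (y, b) *ᵥ v)^[L] u) ⟨B + L, by omega⟩ ≠ 0 := by
  set st : (Fin (R.length + 1) → ℤ) → (Fin (R.length + 1) → ℤ) :=
    fun v => stepM R (y, b) *ᵥ v with hst
  set w : ℕ → ℕ → ℤ := fun m i => extv R (st^[m] u) i with hw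
  -- basic conditions
  have hcB : ¬ condy R y B := by
    rintro ⟨h1, h2, h3⟩
    obtain ⟨c, hc⟩ := (mapfst_eq R (B - 1) y).1 h3
    exact hlo c (by omega) hc
  have hcrun : ∀ j, 1 ≤ j → j ≤ L → condy R y (B + j) := by
    intro j h1 hj
    exact ⟨by omega, by omega, cond_in_run R hrun h1 hj⟩
  have hchi : ¬ condy R y (B + L + 1) := by
    rintro ⟨h1, h2, h3⟩
    obtain ⟨c, hc⟩ := (mapfst_eq R (B + L + 1 - 1) y).1 h3
    rw [show B + L + 1 - 1 = B + L by omega] at hc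
    exact hhi c hc
  have hwsupp : ∀ i, B < i → w 0 i = 0 := by
    intro i hi
    show extv R (st^[0] u) i = 0
    rw [Function.iterate_zero_apply, extv]
    split
    · exact hsupp _ (by simpa)
    · rfl
  have hw0B : w 0 B = u ⟨B, by omega⟩ := by
    show extv R (st^[0] u) B = _
    rw [Function.iterate_zero_apply, extv, dif_pos (by omega : B ≤ R.length)]
  -- choose sign
  set σ : ℤ := if 0 < u ⟨B, by omega⟩ then 1 else -1 with hσ
  have hB : 0 < σ * w 0 B := by
    rw [hw0B, hσ]
    rcases lt_trichotomy (u ⟨B, by omega⟩ : ℤ) 0 with h | h | h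
    · rw [if_neg (by omega)]; omega
    · exact absurd h huB
    · rw [if_pos h]; omega
  -- conclude via the abstract lemmas, by cases on the sign bit
  have final : (∀ i, B + L < i → w L i = 0) ∧ w L (B + L) ≠ 0 := by
    cases b with
    | true =>
      have hrec : ∀ m i, w (m + 1) i = w m i + (if condy R y i then w m (i - 1) else 0) := by
        intro m i
        simp only [hw]
        rw [Function.iterate_succ_apply']
        have : st (st^[m] u) = (MU R y : Matrix (Fin (R.length + 1)) (Fin (R.length + 1)) ℤ)
            *ᵥ (st^[m] u) := by
          rw [hst]; simp [stepM]
        rw [this]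
        exact extv_rec_pos R y _ i
      obtain ⟨h1, h2⟩ := abs_run_pos (condy R y) B L w σ hrec hcB hcrun hwsupp hB
      exact ⟨h1, fun hz => by rw [hz, mul_zero] at h2; exact lt_irrefl _ h2⟩
    | false =>
      have hrec : ∀ m i, w m i = w (m + 1) i + (if condy R y i then w (m + 1) (i - 1) else 0) := by
        intro m i
        simp only [hw]
        rw [Function.iterate_succ_apply']
        have : st (st^[m] u) = (((MU R y)⁻¹ :
            (Matrix (Fin (R.length + 1)) (Fin (R.length + 1)) ℤ)ˣ) :
            Matrix (Fin (R.length + 1)) (Fin (R.length + 1)) ℤ) *ᵥ (st^[m] u) := by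
          rw [hst]; simp [stepM]
        rw [this]
        exact extv_rec_neg R y _ i
      obtain ⟨h1, h2⟩ := abs_run_neg (condy R y) B L w σ hrec hcB hcrun hchi hwsupp hB
      exact ⟨h1, fun hz => by rw [hz, mul_zero] at h2; exact lt_irrefl _ h2⟩
  constructor
  · intro i hi
    have := final.1 (i : ℕ) hi
    rw [hw] at this
    simp only [extv] at this
    rw [dif_pos (by omega : (i : ℕ) ≤ R.length)] at this
    simpa using this
  · intro hz
    apply final.2
    show extv R (st^[L] u) (B + L) = 0
    rw [extv, dif_pos (by omega : B + L ≤ R.length)]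
    exact hz

end Inst



section Main

open scoped Matrix

variable {S : Type*} [DecidableEq S]

theorem drop_eq_replicate_append {α : Type*} (a : α) :
    ∀ (L B : ℕ) (l : List α), (∀ t, t < L → l[B + t]? = some a) →
      l.drop B = List.replicate L a ++ l.drop (B + L)
  | 0, B, l, _ => by simp
  | (L + 1), B, l, h => by
    have h0 : l[B]? = some a := by simpa using h 0 (Nat.succ_pos L)
    obtain ⟨hBlt, hget⟩ := List.getElem?_eq_some_iff.1 h0
    rw [List.drop_eq_getElem_cons hBlt, hget, List.replicate_succ, List.cons_append]
    congr 1
    rw [drop_eq_replicate_append a L (B + 1) l (fun t ht => by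
      rw [show B + 1 + t = B + (t + 1) by omega]; exact h (t + 1) (by omega))]
    rw [show B + 1 + L = B + (L + 1) by omega]

theorem main_ind (R : List (S × Bool))
    (hred : ∀ (i : ℕ) (s : S) (c : Bool), ¬(R[i]? = some (s, c) ∧ R[i + 1]? = some (s, !c))) :
    ∀ (k B : ℕ), R.length - B ≤ k → (hBn : B ≤ R.length) →
    (∀ (p : S × Bool) (c : Bool), B ≠ 0 → R[B]? = some p → R[B - 1]? ≠ some (p.1, c)) →
    ∀ u : Fin (R.length + 1) → ℤ,
    (∀ i : Fin (R.length + 1), B < (i : ℕ) → u i = 0) →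
    u ⟨B, by omega⟩ ≠ 0 →
    runW R (R.drop B) u ⟨R.length, by omega⟩ ≠ 0 := by
  intro k
  induction k with
  | zero =>
    intro B hk hBn hlo u hsupp huB
    have hBe : B = R.length := by omega
    subst hBe
    rw [List.drop_length, runW_nil]
    exact huB
  | succ k ih =>
    intro B hk hBn hlo u hsupp huB
    by_cases hBe : B = R.length
    · subst hBe; rw [List.drop_length, runW_nil]; exact huB
    · have hBlt : B < R.length := by omega
      obtain ⟨y0, b0, hp0⟩ : ∃ y b, R[B]? = some (y, b) :=
        ⟨(R[B]'hBlt).1, (R[B]'hBlt).2, by rw [List.getElem?_eq_getElem hBlt]⟩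
      have hex : ∃ t, ¬(R[B + t]? = some (y0, b0)) := by
        refine ⟨R.length - B, ?_⟩
        rw [show B + (R.length - B) = R.length by omega]
        rw [List.getElem?_eq_none (le_refl R.length)]
        simp
      set L := Nat.find hex with hLdef
      have hLspec : ¬(R[B + L]? = some (y0, b0)) := Nat.find_spec hex
      have hrun : ∀ t, t < L → R[B + t]? = some (y0, b0) := fun t ht =>
        not_not.1 (Nat.find_min hex ht)
      have hL1 : 1 ≤ L := by
        rcases Nat.eq_zero_or_pos L with h0 | h
        · exfalso; apply hLspec; rw [h0, Nat.add_zero]; exact hp0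
        · exact h
      have hLle : B + L ≤ R.length := by
        have := Nat.find_min' hex (by
          rw [show B + (R.length - B) = R.length by omega]
          rw [List.getElem?_eq_none (le_refl R.length)]
          simp)
        omega
      have hprev : R[B + L - 1]? = some (y0, b0) := by
        have := hrun (L - 1) (by omega)
        rw [show B + (L - 1) = B + L - 1 by omega] at this
        exact this
      have hdec : R.drop B = List.replicate L (y0, b0) ++ R.drop (B + L) :=
        drop_eq_replicate_append _ L B R hrun
      rw [hdec, runW_append, runW_replicate]
      have hlo' : ∀ c : Bool, B ≠ 0 → R[B - 1]? ≠ some (y0, c) := fun c hB0 =>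
        hlo (y0, b0) c hB0 hp0
      have hhi : ∀ c : Bool, R[B + L]? ≠ some (y0, c) := by
        intro c hc
        by_cases hcb : c = b0
        · rw [hcb] at hc; exact hLspec hc
        · have hcb' : c = !b0 := by revert hcb; cases c <;> cases b0 <;> decide
          rw [hcb'] at hc
          exact hred (B + L - 1) y0 b0
            ⟨hprev, by rw [show B + L - 1 + 1 = B + L by omega]; exact hc⟩
      obtain ⟨hs', hB'⟩ := run_matrix R y0 b0 B L hLle hL1 hrun hlo' hhi u hsupp huB
      have hlo2 : ∀ (p : S × Bool) (c : Bool), B + L ≠ 0 → R[B + L]? = some p →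
          R[B + L - 1]? ≠ some (p.1, c) := by
        intro p c _ hp hq
        rw [hprev] at hq
        have hq' : y0 = p.1 ∧ b0 = c := by
          have := Option.some.inj hq
          exact ⟨congrArg Prod.fst this, congrArg Prod.snd this⟩
        obtain ⟨hq1, hq2⟩ := hq'
        by_cases hpb : p.2 = b0
        · apply hLspec
          have hpe : p = (y0, b0) := by
            apply Prod.ext <;> simp [← hq1, hpb]
          rw [hpe] at hp; exact hp
        · have hpe : p = (y0, !b0) := by
            apply Prod.ext
            · simp [← hq1]
            · show p.2 = !b0
              revert hpb; cases p.2 <;> cases b0 <;> decide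
          rw [hpe] at hp
          exact hred (B + L - 1) y0 b0
            ⟨hprev, by rw [show B + L - 1 + 1 = B + L by omega]; exact hp⟩
      exact ih (B + L) (by omega) (by omega) hlo2 _ hs' hB'

end Main



end MagnusAux

open scoped Matrix in
/-- Every free group is residually nilpotent: the intersection over all
`k ≥ 1` of the terms `γ_k(F(S))` of the lower central series is trivial.  (Mathlib's
`lowerCentralSeries G n` is `γ_{n+1}(G)`, so the intersection over all `n : ℕ` is exactly
the intersection over all `k ≥ 1` of `γ_k`.) -/
theorem freeGroup_residually_nilpotent {S : Type*} :
    (⨅ n : ℕ, (⊤ : Subgroup (FreeGroup S)).lowerCentralSeries n) = ⊥ := by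
  classical
  rw [eq_bot_iff]
  intro x hx
  rw [Subgroup.mem_bot]
  by_contra hx1
  -- the reversed reduced word of x
  set R : List (S × Bool) := x.toWord.reverse with hR
  have hRrev : R.reverse = x.toWord := by rw [hR, List.reverse_reverse]
  have hnR : R.length ≠ 0 := by
    intro h0
    apply hx1
    have : x.toWord = [] := by
      have := List.length_reverse (as := x.toWord)
      rw [hR] at h0
      rw [List.length_reverse] at h0
      exact List.length_eq_zero_iff.1 h0
    exact FreeGroup.toWord_eq_nil_iff.1 this
  -- R is reduced (no adjacent cancelling pair)
  have hred : ∀ (i : ℕ) (s : S) (c : Bool), ¬(R[i]? = some (s, c) ∧ R[i + 1]? = some (s, !c)) := by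
    rintro i s c ⟨h1, h2⟩
    obtain ⟨hi1, hg1⟩ := List.getElem?_eq_some_iff.1 h1
    obtain ⟨hi2, hg2⟩ := List.getElem?_eq_some_iff.1 h2
    have hsplit : R = R.take i ++ (s, c) :: (s, !c) :: R.drop (i + 2) := by
      conv_lhs => rw [← List.take_append_drop i R]
      congr 1
      rw [List.drop_eq_getElem_cons hi1, hg1]
      congr 1
      rw [List.drop_eq_getElem_cons hi2, hg2]
    have hword : x.toWord = (R.drop (i + 2)).reverse ++ (s, !c) :: (s, !(!c)) :: (R.take i).reverse := by
      rw [← hRrev]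
      conv_lhs => rw [hsplit]
      simp [List.reverse_append, Bool.not_not]
    exact FreeGroup.reduce.not (L₂ := (R.drop (i + 2)).reverse) (L₃ := (R.take i).reverse)
      (x := s) (b := !c) (by rw [FreeGroup.reduce_toWord]; exact hword)
  -- the Magnus homomorphism into unitriangular matrices
  set n : ℕ := R.length with hn
  set φ : FreeGroup S →* (Matrix (Fin (n + 1)) (Fin (n + 1)) ℤ)ˣ :=
    FreeGroup.lift (fun s => MagnusAux.MU R s) with hφ
  have hφ_mem : ∀ z, φ z ∈ MagnusAux.UF (MagnusAux.isFilt_filt n) 1 := by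
    intro z
    have hr : (φ).range ≤ MagnusAux.UF (MagnusAux.isFilt_filt n) 1 := by
      rw [hφ]
      apply FreeGroup.range_lift_le
      rintro _ ⟨s, rfl⟩
      exact MagnusAux.MU_mem_UF R s
    exact hr ⟨z, rfl⟩
  -- x lies in every term of the lower central series, so φ x = 1
  have hxin : x ∈ (⊤ : Subgroup (FreeGroup S)).lowerCentralSeries n := Subgroup.mem_iInf.1 hx n
  set ψ : FreeGroup S →* (MagnusAux.UF (MagnusAux.isFilt_filt n) 1) :=
    φ.codRestrict _ hφ_mem with hψ
  have h1 : ψ x ∈ (⊤ : Subgroup (MagnusAux.UF (MagnusAux.isFilt_filt n) 1)).lowerCentralSeries n :=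
    Subgroup.lowerCentralSeries.map ψ n ⟨x, hxin, rfl⟩
  have h2 := MagnusAux.lcs_le (MagnusAux.isFilt_filt n) n h1
  rw [Subgroup.mem_subgroupOf] at h2
  have h3 : ((φ x : (Matrix (Fin (n + 1)) (Fin (n + 1)) ℤ)ˣ) :
      Matrix (Fin (n + 1)) (Fin (n + 1)) ℤ) - 1 ∈ MagnusAux.filt n (n + 1) := h2.1
  rw [MagnusAux.filt_last, AddSubgroup.mem_bot, sub_eq_zero] at h3
  -- but the Magnus matrix of x acts nontrivially on e₀
  set e0 : Fin (n + 1) → ℤ := fun i => if (i : ℕ) = 0 then 1 else 0 with he0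
  have hword : φ x = ((x.toWord).map fun a =>
      bif a.2 then MagnusAux.MU R a.1 else (MagnusAux.MU R a.1)⁻¹).prod := by
    conv_lhs => rw [← FreeGroup.mk_toWord (x := x)]
    exact FreeGroup.lift_mk
  have hvec : ((φ x : (Matrix (Fin (n + 1)) (Fin (n + 1)) ℤ)ˣ) :
      Matrix (Fin (n + 1)) (Fin (n + 1)) ℤ) *ᵥ e0 = MagnusAux.runW R R e0 := by
    rw [hword]
    have := MagnusAux.prod_mulVec R x.toWord e0
    rwa [← hR] at this
  have hmain := MagnusAux.main_ind R hred n 0 (by omega) (by omega)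
    (fun p c h0 _ => absurd rfl h0) e0
    (fun i hi => by rw [he0]; simp only []; rw [if_neg (by omega)])
    (by rw [he0]; simp)
  rw [List.drop_zero] at hmain
  apply hmain
  rw [← hvec, h3, Matrix.one_mulVec]
  show (if (R.length : ℕ) = 0 then (1 : ℤ) else 0) = 0
  rw [if_neg (by omega)]
end

section
/- Fix p, n, m ≥ 1 with p prime, and let G_0 ⊳ G_1 ⊳ ⋯ ⊳ G_n be a subnormal sequence of groups (each G_i normal in G_{i-1}) such that for 1 ≤ i ≤ n the index [G_{i-1} : G_i] equals p^m. Then there exists a subgroup H with H ≤ G_n, H normal in G_0, and [G_0 : H] = p^N for some integer N with 1 ≤ N ≤ m·(p^{mn} − 1)/(p^m − 1). -/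
open Subgroup

section Aux
variable {Γ : Type*} [Group Γ]

abbrev conjS (g : Γ) (S : Subgroup Γ) : Subgroup Γ := S.map (MulAut.conj g).toMonoidHom

lemma mem_conjS {g x : Γ} {S : Subgroup Γ} : x ∈ conjS g S ↔ g⁻¹ * x * g ∈ S := by
  rw [conjS, Subgroup.mem_map_equiv, MulAut.conj_symm_apply]

lemma conjS_relIndex (g : Γ) (S T : Subgroup Γ) :
    (conjS g S).relIndex (conjS g T) = S.relIndex T := by
  have h1 : conjS g S = Subgroup.comap ((MulAut.conj g).symm.toMonoidHom) S := by
    rw [conjS, Subgroup.map_equiv_eq_comap_symm']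
  rw [h1, Subgroup.relIndex_comap]
  congr 1
  ext x
  simp [Subgroup.mem_map_equiv, mem_conjS, mul_assoc]

lemma conjS_eq_self {c : Γ} {S T : Subgroup Γ} (hST : S ≤ T)
    (hn : (S.subgroupOf T).Normal) (hc : c ∈ T) : conjS c S = S := by
  have h := (Subgroup.normal_subgroupOf_iff hST).mp hn
  ext x
  rw [mem_conjS]
  constructor
  · intro hx
    simpa [mul_assoc] using h _ c hx hc
  · intro hx
    simpa [mul_assoc] using h x c⁻¹ hx (inv_mem hc)

lemma normal_subgroupOf_conjS {S T : Subgroup Γ} (g : Γ) (hST : S ≤ T)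
    (h : (S.subgroupOf T).Normal) : ((conjS g S).subgroupOf (conjS g T)).Normal := by
  rw [Subgroup.normal_subgroupOf_iff (Subgroup.map_mono hST)]
  intro a b ha hb
  rw [mem_conjS] at ha hb ⊢
  have := (Subgroup.normal_subgroupOf_iff hST).mp h _ _ ha hb
  simpa [mul_assoc, mul_inv_rev] using this

lemma relIndex_dvd_of_normal_in {C M X : Subgroup Γ} (hXM : X ≤ M)
    (h : (C.subgroupOf M).Normal) : C.relIndex X ∣ C.relIndex M := by
  haveI := h
  rw [← Subgroup.relIndex_subgroupOf hXM]
  exact Subgroup.relIndex_dvd_index_of_normal _ _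

end Aux

/-- Fix `p, n, m ≥ 1` with `p` prime, and let
`G_0 ⊳ G_1 ⊳ ⋯ ⊳ G_n` be a subnormal sequence of groups (each `G_i` normal in `G_{i-1}`)
with `[G_{i-1} : G_i] = p^m` for `1 ≤ i ≤ n`.  Then there is a subgroup `H ≤ G_n` which is
normal in `G_0` and satisfies `[G_0 : H] = p^N` for some `1 ≤ N ≤ m(p^{mn} − 1)/(p^m − 1)`.

We model `G_0` as the ambient group `Γ` (so `G 0 = ⊤`), normality of `G_{i}` in `G_{i-1}`
via `subgroupOf`, and the index `[G_{i-1} : G_i]` via `Subgroup.relindex`. -/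
theorem subnormal_chain_normal_core {Γ : Type*} [Group Γ] (p m n : ℕ)
    (hp : p.Prime) (hm : 1 ≤ m) (hn : 1 ≤ n)
    (G : ℕ → Subgroup Γ) (hG0 : G 0 = ⊤)
    (hle : ∀ i < n, G (i + 1) ≤ G i)
    (hnorm : ∀ i < n, ((G (i + 1)).subgroupOf (G i)).Normal)
    (hidx : ∀ i < n, (G (i + 1)).relIndex (G i) = p ^ m) :
    ∃ (H : Subgroup Γ) (N : ℕ), H ≤ G n ∧ H.Normal ∧ H.index = p ^ N ∧
      1 ≤ N ∧ N ≤ m * (p ^ (m * n) - 1) / (p ^ m - 1) := by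
  have hp2 : 2 ≤ p := hp.two_le
  -- index of `G k`
  have hGidx : ∀ k, k ≤ n → (G k).index = p ^ (m * k) := by
    intro k
    induction k with
    | zero => intro _; simp [hG0]
    | succ k ih =>
      intro hk
      have hkn : k < n := hk
      rw [← Subgroup.relIndex_mul_index (hle k hkn), hidx k hkn, ih hkn.le, ← pow_add]
      congr 1
      ring
  -- main induction
  have key : ∀ k, k ≤ n → ∃ (H : Subgroup Γ) (N : ℕ), H ≤ G k ∧ H.Normal ∧
      H.index = p ^ N ∧ N ≤ m * ∑ i ∈ Finset.range k, p ^ (m * i) := by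
    intro k
    induction k with
    | zero =>
      intro _
      exact ⟨⊤, 0, by rw [hG0], inferInstance, by simp, by simp⟩
    | succ k ih =>
      intro hk1
      have hkn : k < n := hk1
      obtain ⟨H, N, hHG, hHn, hHi, hN⟩ := ih hkn.le
      have hSle : G (k + 1) ≤ G k := hle k hkn
      have hSn : ((G (k + 1)).subgroupOf (G k)).Normal := hnorm k hkn
      have hTidx : (G k).index = p ^ (m * k) := hGidx k hkn.le
      haveI hfin : Finite (Γ ⧸ G k) := by
        refine Nat.finite_of_card_ne_zero ?_
        rw [← Subgroup.index_eq_card, hTidx]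
        positivity
      haveI : Fintype (Γ ⧸ G k) := Fintype.ofFinite _
      -- H is contained in every conjugate of G k
      have hHconj : ∀ g : Γ, H ≤ conjS g (G k) := by
        intro g x hx
        exact mem_conjS.mpr (hHG (by simpa using hHn.conj_mem x hx g⁻¹))
      -- conjugates of `G (k+1)` indexed by the quotient
      set F : Γ ⧸ G k → Subgroup Γ := fun q => conjS q.out (G (k + 1)) with hF
      have hFg : ∀ g : Γ, conjS g (G (k + 1)) = F (g : Γ ⧸ G k) := by
        intro g
        have hcT : g⁻¹ * ((g : Γ ⧸ G k).out) ∈ G k :=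
          QuotientGroup.eq.mp (QuotientGroup.out_eq' (g : Γ ⧸ G k)).symm
        have hout : (g : Γ ⧸ G k).out = g * (g⁻¹ * (g : Γ ⧸ G k).out) := by
          simp
        rw [hF]
        simp only
        rw [hout]
        have : conjS (g * (g⁻¹ * (g : Γ ⧸ G k).out)) (G (k + 1)) =
            conjS g (conjS (g⁻¹ * (g : Γ ⧸ G k).out) (G (k + 1))) := by
          ext x
          simp [mem_conjS, mul_assoc, mul_inv_rev]
        rw [this, conjS_eq_self hSle hSn hcT]
      set K : Subgroup Γ := ⨅ q : Γ ⧸ G k, F q with hK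
      have hKmem : ∀ x : Γ, x ∈ K ↔ ∀ g : Γ, x ∈ conjS g (G (k + 1)) := by
        intro x
        rw [hK, Subgroup.mem_iInf]
        constructor
        · intro h g
          rw [hFg g]
          exact h _
        · intro h q
          exact h q.out
      have hKnormal : K.Normal := by
        constructor
        intro x hx γ
        rw [hKmem] at hx ⊢
        intro g
        have := hx (γ⁻¹ * g)
        rw [mem_conjS] at this ⊢
        simpa [mul_assoc, mul_inv_rev] using this
      have hKS : K ≤ G (k + 1) := by
        intro x hx
        have := (hKmem x).mp hx 1
        simpa [mem_conjS] using this
      -- dvd bound for finite intersections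
      have hdvd : ∀ s : Finset (Γ ⧸ G k),
          (H ⊓ ⨅ q ∈ s, F q).relIndex H ∣ p ^ (m * s.card) := by
        intro s
        classical
        induction s using Finset.induction_on with
        | empty => simp [Subgroup.relIndex_self]
        | @insert a s ha ihs =>
          have hnew : (H ⊓ ⨅ q ∈ insert a s, F q) = (H ⊓ ⨅ q ∈ s, F q) ⊓ F a := by
            rw [Finset.iInf_insert, inf_comm (F a), ← inf_assoc]
          rw [hnew]
          set X := H ⊓ ⨅ q ∈ s, F q with hX
          have hXH : X ≤ H := inf_le_left
          rw [← Subgroup.relIndex_mul_relIndex (X ⊓ F a) X H inf_le_left hXH]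
          have hcard : (insert a s).card = s.card + 1 := Finset.card_insert_of_notMem ha
          have hpow : p ^ (m * (insert a s).card) = p ^ m * p ^ (m * s.card) := by
            rw [hcard, ← pow_add]
            congr 1
            ring
          rw [hpow]
          refine mul_dvd_mul ?_ ihs
          rw [Subgroup.inf_relIndex_left]
          have hd : (F a).relIndex X ∣ (F a).relIndex (conjS a.out (G k)) :=
            relIndex_dvd_of_normal_in (hXH.trans (hHconj a.out))
              (normal_subgroupOf_conjS a.out hSle hSn)
          rwa [hF, conjS_relIndex, hidx k hkn] at hd
      have hcardQ : (Finset.univ : Finset (Γ ⧸ G k)).card = p ^ (m * k) := by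
        rw [Finset.card_univ, ← Nat.card_eq_fintype_card, ← Subgroup.index_eq_card, hTidx]
      have hKuniv : (⨅ q ∈ (Finset.univ : Finset (Γ ⧸ G k)), F q) = K := by
        rw [hK]
        simp
      have hdvd2 : (H ⊓ K).relIndex H ∣ p ^ (m * p ^ (m * k)) := by
        have := hdvd Finset.univ
        rwa [hKuniv, hcardQ] at this
      obtain ⟨j, hj, hjrel⟩ := (Nat.dvd_prime_pow hp).mp hdvd2
      refine ⟨H ⊓ K, j + N, inf_le_right.trans hKS, Subgroup.normal_inf_normal H K, ?_, ?_⟩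
      · rw [← Subgroup.relIndex_mul_index (inf_le_left : H ⊓ K ≤ H), hjrel, hHi, ← pow_add]
      · rw [Finset.sum_range_succ, mul_add]
        exact le_trans (add_le_add hj hN) (le_of_eq (add_comm _ _))
  obtain ⟨H, N, hHG, hHn, hHi, hN⟩ := key n le_rfl
  -- `G n ≤ G 1`
  have hchain : ∀ j, j ≤ n → 1 ≤ j → G j ≤ G 1 := by
    intro j
    induction j with
    | zero => intro _ h; omega
    | succ j ih =>
      intro hj h1
      rcases Nat.eq_zero_or_pos j with h0 | h0
      · subst h0; exact le_rfl
      · exact (hle j (by omega)).trans (ih (by omega) h0)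
  have hG1idx : (G 1).index = p ^ m := by
    have := hidx 0 hn
    rwa [hG0, Subgroup.relIndex_top_right] at this
  have hN1 : 1 ≤ N := by
    by_contra h
    have hN0 : N = 0 := by omega
    have hd : (G 1).index ∣ H.index := Subgroup.index_dvd_of_le (hHG.trans (hchain n le_rfl hn))
    rw [hHi, hN0, pow_zero, hG1idx] at hd
    have := Nat.eq_one_of_dvd_one hd
    have h2 : 2 ≤ p ^ m := hp2.trans (Nat.le_self_pow (by omega) p)
    omega
  refine ⟨H, N, hHG, hHn, hHi, hN1, ?_⟩
  have hpm2 : 2 ≤ p ^ m := hp2.trans (Nat.le_self_pow (by omega) p)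
  have hdgeo : p ^ m - 1 ∣ p ^ (m * n) - 1 := by
    have := Nat.sub_dvd_pow_sub_pow (p ^ m) 1 n
    simpa [← pow_mul] using this
  rw [Nat.mul_div_assoc m hdgeo, pow_mul, ← Nat.geomSum_eq hpm2 n]
  calc N ≤ m * ∑ i ∈ Finset.range n, p ^ (m * i) := hN
    _ = m * ∑ i ∈ Finset.range n, (p ^ m) ^ i := by
        congr 1
        exact Finset.sum_congr rfl fun i _ => by rw [← pow_mul]
end

section
/- Fix p, r, s ≥ 1 with p prime, and let A ⊳ B ⊳ C be groups with B normal in A, C normal in B, [A : B] = p^r, and [B : C] = p^s. Then there exists a subgroup D with D ≤ C, D normal in A, and [A : D] = p^N for some integer N with 1 ≤ N ≤ p^r·s + r. -/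
open Subgroup

private lemma aux_iInf_index_dvd {G : Type*} [Group G] {ι : Type*} [DecidableEq ι]
    (t : Finset ι) (H : ι → Subgroup G) (n : ℕ)
    (hnorm : ∀ i, (H i).Normal) (hidx : ∀ i, (H i).index ∣ n) :
    (⨅ i ∈ t, H i).index ∣ n ^ t.card := by
  induction t using Finset.induction with
  | empty => simp
  | @insert a t ha ih =>
    rw [Finset.iInf_insert, Finset.card_insert_of_notMem ha, pow_succ']
    set K := ⨅ i ∈ t, H i with hK
    have h1 : (H a ⊓ K).index = (H a).relIndex K * K.index := by
      rw [← inf_relIndex_right (H a) K, relIndex_mul_index inf_le_right]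
    rw [h1]
    exact mul_dvd_mul (dvd_trans (@relIndex_dvd_index_of_normal _ _ (H a) K (hnorm a)) (hidx a)) ih

/-- Fix `p, r, s ≥ 1` with `p` prime, and let `A ⊳ B ⊳ C` be groups with
`B` normal in `A`, `C` normal in `B`, `[A : B] = p^r` and `[B : C] = p^s`.  Then there is a
subgroup `D ≤ C` which is normal in `A` and satisfies `[A : D] = p^N` for some integer `N`
with `1 ≤ N ≤ p^r·s + r`.

We model `A` as the ambient group, normality of `C` in `B` via `subgroupOf`, and the index
`[B : C]` via `Subgroup.relindex`. -/
theorem exists_normal_subgroup_of_two_step {A : Type*} [Group A] (p r s : ℕ)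
    (hp : p.Prime) (hr : 1 ≤ r) (hs : 1 ≤ s)
    (B C : Subgroup A) (hCB : C ≤ B)
    (hBnorm : B.Normal) (hCnorm : (C.subgroupOf B).Normal)
    (hB : B.index = p ^ r) (hC : C.relIndex B = p ^ s) :
    ∃ (D : Subgroup A) (N : ℕ), D ≤ C ∧ D.Normal ∧ D.index = p ^ N ∧
      1 ≤ N ∧ N ≤ p ^ r * s + r := by
  classical
  -- elementwise: conjugation by B preserves C
  have hCc : ∀ b ∈ B, ∀ c ∈ C, b * c * b⁻¹ ∈ C := by
    intro b hb c hc
    have := hCnorm.conj_mem ⟨c, hCB hc⟩ (by simpa [Subgroup.mem_subgroupOf] using hc) ⟨b, hb⟩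
    simpa [Subgroup.mem_subgroupOf] using this
  -- B is fixed by conjugation
  have hBmap : ∀ g : A, B.map (MulAut.conj g).toMonoidHom = B := by
    intro g
    apply le_antisymm
    · rintro x ⟨b, hb, rfl⟩
      simpa using hBnorm.conj_mem b hb g
    · intro b hb
      exact ⟨g⁻¹ * b * g, by simpa using hBnorm.conj_mem b hb g⁻¹, by simp [mul_assoc]⟩
  -- well-definedness on cosets
  have wd : ∀ g g' : A, (g : A ⧸ B) = (g' : A ⧸ B) →
      C.map (MulAut.conj g).toMonoidHom = C.map (MulAut.conj g').toMonoidHom := by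
    intro g g' h
    have hb : g⁻¹ * g' ∈ B := (QuotientGroup.eq).mp h
    apply le_antisymm
    · rintro x ⟨c, hc, rfl⟩
      refine ⟨(g'⁻¹ * g) * c * (g'⁻¹ * g)⁻¹, hCc _ (by simpa using B.inv_mem hb) _ hc, ?_⟩
      simp [mul_assoc]
    · rintro x ⟨c, hc, rfl⟩
      refine ⟨(g⁻¹ * g') * c * (g⁻¹ * g')⁻¹, hCc _ hb _ hc, ?_⟩
      simp [mul_assoc]
  set F : A ⧸ B → Subgroup A := fun q => C.map (MulAut.conj q.out).toMonoidHom with hF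
  have F_mk : ∀ g : A, F (g : A ⧸ B) = C.map (MulAut.conj g).toMonoidHom := by
    intro g
    exact wd _ _ (by simp)
  set D : Subgroup A := ⨅ q : A ⧸ B, F q with hD
  -- D ≤ C
  have hD_le : D ≤ C := by
    refine le_trans (iInf_le F ((1 : A) : A ⧸ B)) ?_
    rw [F_mk]
    rintro x ⟨c, hc, rfl⟩
    simpa [MulAut.conj_apply, MulEquiv.coe_toMonoidHom] using hc
  -- D normal
  have hD_norm : D.Normal := by
    constructor
    intro n hn g
    rw [Subgroup.mem_iInf] at hn ⊢
    intro q
    induction q using QuotientGroup.induction_on with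
    | H a =>
      have := hn ((g⁻¹ * a : A) : A ⧸ B)
      rw [F_mk] at this ⊢
      obtain ⟨c, hc, hce⟩ := this
      refine ⟨c, hc, ?_⟩
      simp only [MulEquiv.coe_toMonoidHom, MulAut.conj_apply] at hce ⊢
      rw [← hce]
      group
  -- each F q ≤ B, normal in B, relindex p^s
  have hFB : ∀ g : A, C.map (MulAut.conj g).toMonoidHom ≤ B := by
    intro g
    rw [← hBmap g]
    exact Subgroup.map_mono hCB
  have hD_le_B : D ≤ B := hD_le.trans hCB
  have hFnorm : ∀ q : A ⧸ B, ((F q).subgroupOf B).Normal := by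
    intro q
    induction q using QuotientGroup.induction_on with
    | H g =>
      rw [F_mk]
      constructor
      rintro ⟨n, hnB⟩ hn ⟨b, hbB⟩
      rw [Subgroup.mem_subgroupOf] at hn ⊢
      obtain ⟨c, hc, hce⟩ := hn
      simp only [MulAut.conj_apply] at hce
      have hb' : g⁻¹ * b * g ∈ B := by simpa using hBnorm.conj_mem b hbB g⁻¹
      refine ⟨(g⁻¹ * b * g) * c * (g⁻¹ * b * g)⁻¹, hCc _ hb' _ hc, ?_⟩
      simp only [MulEquiv.coe_toMonoidHom, MulAut.conj_apply, MulMemClass.mk_mul_mk,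
        Subgroup.coe_mul, InvMemClass.coe_inv] at hce ⊢
      rw [← hce]
      group
  have hFidx : ∀ q : A ⧸ B, (F q).relIndex B = p ^ s := by
    intro q
    induction q using QuotientGroup.induction_on with
    | H g =>
      rw [F_mk]
      have hmc : C.map (MulAut.conj g).toMonoidHom = C.comap (MulAut.conj g⁻¹).toMonoidHom := by
        ext x
        simp only [Subgroup.mem_map, Subgroup.mem_comap, MulAut.conj_apply]
        constructor
        · rintro ⟨c, hc, rfl⟩
          simpa [mul_assoc] using hc
        · intro hx
          exact ⟨g⁻¹ * x * g, by simpa [mul_assoc] using hx, by simp [mul_assoc]⟩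
      rw [hmc, relIndex_comap, hBmap g⁻¹, hC]
  -- finiteness of A ⧸ B
  have hpne : p ^ s ≠ 0 := pow_ne_zero _ hp.ne_zero
  haveI : B.FiniteIndex := ⟨by rw [hB]; exact pow_ne_zero _ hp.ne_zero⟩
  haveI : Finite (A ⧸ B) := Subgroup.finite_quotient_of_finiteIndex (H := B)
  haveI : Fintype (A ⧸ B) := Fintype.ofFinite _
  -- relindex of D in B divides p^(s * p^r)
  have hDsub : D.subgroupOf B = ⨅ q ∈ (Finset.univ : Finset (A ⧸ B)), (F q).subgroupOf B := by
    ext x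
    simp [Subgroup.mem_subgroupOf, Subgroup.mem_iInf, hD]
  have hdvd : D.relIndex B ∣ (p ^ s) ^ (Finset.univ : Finset (A ⧸ B)).card := by
    rw [Subgroup.relIndex, hDsub]
    exact aux_iInf_index_dvd _ _ _ (fun q => hFnorm q)
      (fun q => by rw [show ((F q).subgroupOf B).index = (F q).relIndex B from rfl, hFidx q])
  have hcard : (Finset.univ : Finset (A ⧸ B)).card = p ^ r := by
    rw [Finset.card_univ, ← Nat.card_eq_fintype_card]
    exact hB ▸ rfl
  rw [hcard, ← pow_mul] at hdvd
  obtain ⟨m, hm, hrel⟩ := (Nat.dvd_prime_pow hp).mp hdvd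
  refine ⟨D, m + r, hD_le, hD_norm, ?_, by omega, ?_⟩
  · rw [← relIndex_mul_index hD_le_B, hrel, hB, ← pow_add]
  · calc m + r ≤ s * p ^ r + r := by omega
      _ = p ^ r * s + r := by ring
end

section
/- Let G be a group, let p be a prime, and let m, n ≥ 1. Suppose G = G_0 ⊳ G_1 ⊳ ⋯ ⊳ G_n is a subnormal sequence of subgroups with [G_{i-1} : G_i] = p^m for 1 ≤ i ≤ n, and set M = m·(p^{mn} − 1)/(p^m − 1). Then γ_{M+1}(G) ≤ G_n; in particular, if x ∈ G does not lie in G_n, then x does not lie in γ_{M+1}(G). -/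
open Subgroup Finset

section Aux

variable {p : ℕ}

/-- If the lower central series stabilizes in a nilpotent group, it has hit the bottom. -/
private lemma lcs_stab {Q : Type*} [Group Q] [Group.IsNilpotent Q] {k : ℕ}
    (h : (⊤ : Subgroup Q).lowerCentralSeries (k + 1) = (⊤ : Subgroup Q).lowerCentralSeries k) :
    (⊤ : Subgroup Q).lowerCentralSeries k = ⊥ := by
  obtain ⟨c, hc⟩ := Subgroup.nilpotent_iff_lowerCentralSeries.mp ‹_›
  have key : ∀ j, (⊤ : Subgroup Q).lowerCentralSeries (k + j) = (⊤ : Subgroup Q).lowerCentralSeries k := by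
    intro j
    induction j with
    | zero => rfl
    | succ j ihj =>
      have : k + (j + 1) = (k + j) + 1 := by omega
      rw [this, Subgroup.lowerCentralSeries_succ, ihj, ← Subgroup.lowerCentralSeries_succ, h]
  refine le_bot_iff.mp ?_
  calc (⊤ : Subgroup Q).lowerCentralSeries k = (⊤ : Subgroup Q).lowerCentralSeries (k + c) := (key c).symm
    _ ≤ (⊤ : Subgroup Q).lowerCentralSeries c := Subgroup.lowerCentralSeries_antitone ⊤ (Nat.le_add_left c k)
    _ = ⊥ := hc

/-- A group whose cardinality divides `p ^ e` has `γ_{e+1} = 1`. -/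
private lemma lcs_eq_bot_of_card_dvd {Q : Type*} [Group Q] (hp : p.Prime) {e : ℕ}
    (h : Nat.card Q ∣ p ^ e) : (⊤ : Subgroup Q).lowerCentralSeries e = ⊥ := by
  have hpe : p ^ e ≠ 0 := pow_ne_zero e hp.pos.ne'
  have hcard0 : Nat.card Q ≠ 0 := by
    intro h0
    rw [h0] at h
    exact hpe (Nat.eq_zero_of_zero_dvd h)
  haveI : Finite Q := Nat.finite_of_card_ne_zero hcard0
  haveI : Fact p.Prime := ⟨hp⟩
  obtain ⟨j, hje, hj⟩ := (Nat.dvd_prime_pow hp).mp h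
  haveI : Group.IsNilpotent Q := (IsPGroup.of_card hj).isNilpotent
  have main : ∀ k, (⊤ : Subgroup Q).lowerCentralSeries k = ⊥ ∨
      Nat.card ((⊤ : Subgroup Q).lowerCentralSeries k) ∣ p ^ (e - k) := by
    intro k
    induction k with
    | zero =>
      right
      rw [Subgroup.lowerCentralSeries_zero, Subgroup.card_top, Nat.sub_zero]
      exact h
    | succ k ih =>
      rcases ih with hbot | hdvd
      · left
        exact le_bot_iff.mp (hbot ▸ Subgroup.lowerCentralSeries_antitone ⊤ (Nat.le_succ k))
      · by_cases heq : (⊤ : Subgroup Q).lowerCentralSeries (k + 1) = (⊤ : Subgroup Q).lowerCentralSeries k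
        · left
          rw [heq]
          exact lcs_stab heq
        · right
          have hle : (⊤ : Subgroup Q).lowerCentralSeries (k + 1) ≤ (⊤ : Subgroup Q).lowerCentralSeries k :=
            Subgroup.lowerCentralSeries_antitone ⊤ (Nat.le_succ k)
          have hdvd1 : Nat.card ((⊤ : Subgroup Q).lowerCentralSeries (k + 1)) ∣
              Nat.card ((⊤ : Subgroup Q).lowerCentralSeries k) := Subgroup.card_dvd_of_le hle
          have hne : Nat.card ((⊤ : Subgroup Q).lowerCentralSeries (k + 1)) ≠
              Nat.card ((⊤ : Subgroup Q).lowerCentralSeries k) := by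
            intro hcardeq
            exact heq (Subgroup.eq_of_le_of_card_ge hle hcardeq.ge)
          obtain ⟨s, hs, hseq⟩ := (Nat.dvd_prime_pow hp).mp (hdvd1.trans hdvd)
          obtain ⟨t, ht, hteq⟩ := (Nat.dvd_prime_pow hp).mp hdvd
          have hst : s < t := by
            have h1 : p ^ s ∣ p ^ t := by rw [← hseq, ← hteq]; exact hdvd1
            have h2 : s ≤ t := (Nat.pow_dvd_pow_iff_le_right hp.one_lt).mp h1
            rcases h2.lt_or_eq with hlt | heq'
            · exact hlt
            · exact absurd (by rw [hseq, hteq, heq']) hne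
          rw [hseq]
          exact pow_dvd_pow p (by omega)
  rcases main e with hbot | hdvd
  · exact hbot
  · have h1 : Nat.card ((⊤ : Subgroup Q).lowerCentralSeries e) ∣ 1 := by simpa using hdvd
    exact Subgroup.card_eq_one.mp (Nat.dvd_one.mp h1)

private lemma index_inf_dvd {Γ : Type*} [Group Γ] {H K : Subgroup Γ} (hH : H.Normal) :
    (H ⊓ K).index ∣ H.index * K.index := by
  haveI := hH
  have h1 : (H ⊓ K).relIndex K * K.index = (H ⊓ K).index :=
    Subgroup.relIndex_mul_index inf_le_right
  rw [← h1, Subgroup.inf_relIndex_right]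
  exact Nat.mul_dvd_mul (Subgroup.relIndex_dvd_index_of_normal H K) dvd_rfl

private lemma index_iInf_dvd {Γ : Type*} [Group Γ] {ι : Type*} [Fintype ι]
    (f : ι → Subgroup Γ) (hf : ∀ i, (f i).Normal) {d : ℕ} (hd : ∀ i, (f i).index ∣ d) :
    (⨅ i, f i).index ∣ d ^ Fintype.card ι := by
  classical
  have main : ∀ s : Finset ι, (s.inf f).index ∣ d ^ s.card := by
    intro s
    induction s using Finset.induction_on with
    | empty => simp
    | @insert a s ha ih =>
      rw [Finset.inf_insert, Finset.card_insert_of_notMem ha]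
      calc (f a ⊓ s.inf f).index ∣ (f a).index * (s.inf f).index := index_inf_dvd (hf a)
        _ ∣ d * d ^ s.card := Nat.mul_dvd_mul (hd a) ih
        _ = d ^ (s.card + 1) := by ring
  have huniv : Finset.univ.inf f = ⨅ i, f i := by
    apply le_antisymm
    · exact le_iInf fun i => Finset.inf_le (Finset.mem_univ i)
    · exact Finset.le_inf fun i _ => iInf_le f i
  have := main Finset.univ
  rwa [huniv, Finset.card_univ] at this

end Aux

universe u

set_option maxHeartbeats 2000000 in
/-- Key induction: a subnormal chain with `p^m` indices contains a normal subgroup of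
`p`-power index bounded by the expected geometric sum. -/
private lemma key_chain {p m : ℕ} (hp : p.Prime) :
    ∀ (n : ℕ) (Γ : Type u) [Group Γ] (G : ℕ → Subgroup Γ),
      G 0 = ⊤ →
      (∀ i < n, G (i + 1) ≤ G i) →
      (∀ i < n, ((G (i + 1)).subgroupOf (G i)).Normal) →
      (∀ i < n, (G (i + 1)).relIndex (G i) = p ^ m) →
      ∃ K : Subgroup Γ, K.Normal ∧ K ≤ G n ∧
        K.index ∣ p ^ (m * ∑ i ∈ Finset.range n, p ^ (m * i)) := by
  intro n
  induction n with
  | zero =>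
    intro Γ _ G hG0 _ _ _
    exact ⟨⊤, inferInstance, hG0 ▸ le_rfl, by simp⟩
  | succ n ih =>
    intro Γ instΓ G hG0 hle hnorm hidx
    -- `G 1` is normal in `Γ`
    have hG1 : (G 1).Normal := by
      have Hn := hnorm 0 (Nat.succ_pos n)
      rw [hG0] at Hn
      constructor
      intro x hx g
      have hmem : (⟨x, Subgroup.mem_top x⟩ : ((⊤ : Subgroup Γ) : Type _)) ∈
          (G 1).subgroupOf ⊤ := by simpa [Subgroup.mem_subgroupOf] using hx
      have := Hn.conj_mem _ hmem ⟨g, Subgroup.mem_top g⟩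
      simpa [Subgroup.mem_subgroupOf] using this
    have hchain : ∀ i, i ≤ n → G (i + 1) ≤ G 1 := by
      intro i
      induction i with
      | zero => intro _; exact le_rfl
      | succ j ihj => intro hj; exact (hle (j + 1) (by omega)).trans (ihj (by omega))
    -- transfer the chain inside `G 1`
    have hnorm' : ∀ i < n,
        ((((G (i + 2)).subgroupOf (G 1))).subgroupOf ((G (i + 1)).subgroupOf (G 1))).Normal := by
      intro i hi
      have Hi := hnorm (i + 1) (by omega)
      have hle1 : G (i + 1) ≤ G 1 := hchain i (by omega)
      have heq : ((G (i + 2)).subgroupOf (G 1)).subgroupOf ((G (i + 1)).subgroupOf (G 1)) =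
          Subgroup.comap (Subgroup.subgroupOfEquivOfLe hle1).toMonoidHom
            ((G (i + 2)).subgroupOf (G (i + 1))) := by
        ext x
        simp [Subgroup.mem_subgroupOf, Subgroup.mem_comap]
      rw [heq]
      exact Hi.comap _
    have hidx' : ∀ i < n, ((G (i + 2)).subgroupOf (G 1)).relIndex
        ((G (i + 1)).subgroupOf (G 1)) = p ^ m := by
      intro i hi
      rw [Subgroup.relIndex_subgroupOf (hchain i (by omega))]
      exact hidx (i + 1) (by omega)
    obtain ⟨N, hNnorm, hNle, hNidx⟩ :=
      ih ↥(G 1) (fun i => (G (i + 1)).subgroupOf (G 1))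
        (Subgroup.subgroupOf_self _)
        (fun i hi => Subgroup.comap_mono (hle (i + 1) (by omega)))
        hnorm' hidx'
    -- push `N` back to `Γ`
    set H : Subgroup Γ := N.map (G 1).subtype with hH
    have hHle : H ≤ G (n + 1) := by
      calc H ≤ ((G (n + 1)).subgroupOf (G 1)).map (G 1).subtype := Subgroup.map_mono hNle
        _ = G (n + 1) ⊓ G 1 := Subgroup.subgroupOf_map_subtype _ _
        _ ≤ G (n + 1) := inf_le_left
    have hHleG1 : H ≤ G 1 := hHle.trans (hchain n le_rfl)
    have hH1 : ∀ h ∈ G 1, ∀ y ∈ H, h * y * h⁻¹ ∈ H := by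
      intro h hh y hy
      obtain ⟨z, hz, rfl⟩ := hy
      exact ⟨⟨h, hh⟩ * z * ⟨h, hh⟩⁻¹, hNnorm.conj_mem z hz ⟨h, hh⟩, rfl⟩
    -- conjugates of `H` only depend on the coset mod `G 1`
    have hCcoset : ∀ (γ g : Γ), g ∈ G 1 →
        H.comap (MulAut.conj (γ * g)).toMonoidHom = H.comap (MulAut.conj γ).toMonoidHom := by
      intro γ g hg
      have ha : γ * g * γ⁻¹ ∈ G 1 := hG1.conj_mem g hg γ
      ext x
      simp only [Subgroup.mem_comap, MulEquiv.coe_toMonoidHom, MulAut.conj_apply]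
      constructor
      · intro hx
        have h2 := hH1 _ ((G 1).inv_mem ha) _ hx
        have h3 : (γ * g * γ⁻¹)⁻¹ * (γ * g * x * (γ * g)⁻¹) * ((γ * g * γ⁻¹)⁻¹)⁻¹ =
            γ * x * γ⁻¹ := by group
        rwa [h3] at h2
      · intro hx
        have h2 := hH1 _ ha _ hx
        have h3 : (γ * g * γ⁻¹) * (γ * x * γ⁻¹) * (γ * g * γ⁻¹)⁻¹ =
            γ * g * x * (γ * g)⁻¹ := by group
        rwa [h3] at h2
    have hout : ∀ γ : Γ, γ⁻¹ * (QuotientGroup.mk γ : Γ ⧸ G 1).out ∈ G 1 := by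
      intro γ
      have h1 : (QuotientGroup.mk ((QuotientGroup.mk γ : Γ ⧸ G 1).out) : Γ ⧸ G 1) =
          QuotientGroup.mk γ := Quotient.out_eq' _
      exact QuotientGroup.eq.mp h1.symm
    have hKleC : ∀ γ : Γ,
        (⨅ q : Γ ⧸ G 1, H.comap (MulAut.conj q.out).toMonoidHom) ≤
          H.comap (MulAut.conj γ).toMonoidHom := by
      intro γ
      have h1 := iInf_le (fun q : Γ ⧸ G 1 => H.comap (MulAut.conj q.out).toMonoidHom)
        (QuotientGroup.mk γ)
      have h2 : (QuotientGroup.mk γ : Γ ⧸ G 1).out =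
          γ * (γ⁻¹ * (QuotientGroup.mk γ : Γ ⧸ G 1).out) := by group
      rw [show H.comap (MulAut.conj (QuotientGroup.mk γ : Γ ⧸ G 1).out).toMonoidHom =
          H.comap (MulAut.conj γ).toMonoidHom from h2 ▸ hCcoset γ _ (hout γ)] at h1
      exact h1
    refine ⟨⨅ q : Γ ⧸ G 1, H.comap (MulAut.conj q.out).toMonoidHom, ?_, ?_, ?_⟩
    · -- normality
      constructor
      intro x hx g
      rw [Subgroup.mem_iInf]
      intro q
      have hx' := hKleC (q.out * g) hx
      simp only [Subgroup.mem_comap, MulEquiv.coe_toMonoidHom, MulAut.conj_apply] at hx' ⊢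
      have h3 : q.out * (g * x * g⁻¹) * q.out⁻¹ = q.out * g * x * (q.out * g)⁻¹ := by
        group
      rw [h3]
      exact hx'
    · -- contained in `G (n+1)`
      refine (hKleC 1).trans ?_
      intro x hx
      simp only [Subgroup.mem_comap, MulEquiv.coe_toMonoidHom, MulAut.conj_apply, one_mul, inv_one, mul_one] at hx
      exact hHle hx
    · -- the index bound
      have hidx1 : (G 1).index = p ^ m := by
        have h := hidx 0 (Nat.succ_pos n)
        rwa [hG0, Subgroup.relIndex_top_right] at h
      have hfin : Finite (Γ ⧸ G 1) := by
        refine Nat.finite_of_card_ne_zero ?_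
        rw [← Subgroup.index_eq_card, hidx1]
        exact pow_ne_zero m hp.pos.ne'
      haveI := hfin
      haveI := Fintype.ofFinite (Γ ⧸ G 1)
      have hcardQ : Fintype.card (Γ ⧸ G 1) = p ^ m := by
        rw [← Nat.card_eq_fintype_card, ← Subgroup.index_eq_card, hidx1]
      -- conjugation automorphisms of `G 1`
      have hconjmem : ∀ (γ : Γ) (x : ↥(G 1)),
          (MulAut.conj γ).toMonoidHom.domRestrict (G 1) x ∈ G 1 := by
        intro γ x
        simpa using hG1.conj_mem x x.2 γ
      set f : Γ → (↥(G 1) →* ↥(G 1)) := fun γ =>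
        ((MulAut.conj γ).toMonoidHom.domRestrict (G 1)).codRestrict (G 1) (hconjmem γ) with hfdef
      have hfsurj : ∀ γ : Γ, Function.Surjective (f γ) := by
        intro γ y
        have hy' : γ⁻¹ * ↑y * γ ∈ G 1 := by simpa using hG1.conj_mem y y.2 γ⁻¹
        refine ⟨⟨γ⁻¹ * ↑y * γ, hy'⟩, ?_⟩
        ext
        show γ * (γ⁻¹ * (y : Γ) * γ) * γ⁻¹ = (y : Γ)
        group
      have hNeq : Subgroup.comap (G 1).subtype H = N :=
        Subgroup.comap_map_eq_self_of_injective (G 1).subtype_injective N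
      have key1 : ∀ γ : Γ,
          (H.comap (MulAut.conj γ).toMonoidHom).subgroupOf (G 1) = N.comap (f γ) := by
        intro γ
        have hcomm : (MulAut.conj γ).toMonoidHom.comp (G 1).subtype =
            (G 1).subtype.comp (f γ) := by
          ext x; rfl
        show (H.comap (MulAut.conj γ).toMonoidHom).comap (G 1).subtype = N.comap (f γ)
        rw [Subgroup.comap_comap, hcomm, ← Subgroup.comap_comap, hNeq]
      have hKleG1 : (⨅ q : Γ ⧸ G 1, H.comap (MulAut.conj q.out).toMonoidHom) ≤ G 1 := by
        refine (hKleC 1).trans ?_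
        intro x hx
        simp only [Subgroup.mem_comap, MulEquiv.coe_toMonoidHom, MulAut.conj_apply, one_mul, inv_one, mul_one] at hx
        exact hHleG1 hx
      have hsub : ((⨅ q : Γ ⧸ G 1, H.comap (MulAut.conj q.out).toMonoidHom)).subgroupOf (G 1)
          = ⨅ q : Γ ⧸ G 1, N.comap (f q.out) := by
        show Subgroup.comap (G 1).subtype _ = _
        rw [Subgroup.comap_iInf]
        exact iInf_congr fun q => key1 q.out
      have hrel : ((⨅ q : Γ ⧸ G 1, H.comap (MulAut.conj q.out).toMonoidHom)).relIndex (G 1)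
          ∣ (p ^ (m * ∑ i ∈ Finset.range n, p ^ (m * i))) ^ (p ^ m) := by
        have heqidx : ((⨅ q : Γ ⧸ G 1, H.comap (MulAut.conj q.out).toMonoidHom)).relIndex
            (G 1) = (⨅ q : Γ ⧸ G 1, N.comap (f q.out)).index := by
          rw [Subgroup.relIndex, hsub]
        rw [heqidx, ← hcardQ]
        exact index_iInf_dvd (fun q : Γ ⧸ G 1 => N.comap (f q.out)) (fun q => hNnorm.comap (f q.out))
          (fun q => by
            simp only [N.index_comap_of_surjective (hfsurj q.out)]
            exact hNidx)
      have hmul := Subgroup.relIndex_mul_index hKleG1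
      rw [hidx1] at hmul
      rw [← hmul]
      have hexp : m * ∑ i ∈ Finset.range (n + 1), p ^ (m * i)
          = (m * ∑ i ∈ Finset.range n, p ^ (m * i)) * p ^ m + m := by
        rw [Finset.sum_range_succ']
        have h1 : ∀ i ∈ Finset.range n, p ^ (m * (i + 1)) = p ^ (m * i) * p ^ m := by
          intro i _; rw [Nat.mul_succ, pow_add]
        rw [Finset.sum_congr rfl h1, ← Finset.sum_mul]
        simp [Nat.mul_add, Nat.add_mul, Nat.mul_one]
        ring
      rw [hexp, pow_add]
      exact Nat.mul_dvd_mul (by rw [pow_mul]; exact hrel) dvd_rfl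

/-- Let `G` be a group, `p` a prime, and `m, n ≥ 1`.  Suppose
`G = G_0 ⊳ G_1 ⊳ ⋯ ⊳ G_n` is a subnormal sequence with `[G_{i-1} : G_i] = p^m` for
`1 ≤ i ≤ n`, and set `M = m(p^{mn} − 1)/(p^m − 1)`.  Then `γ_{M+1}(G) ≤ G_n`; in
particular every `x ∉ G_n` satisfies `x ∉ γ_{M+1}(G)`.

We model `G_0` as the ambient group (so `G 0 = ⊤`); Mathlib's
`lowerCentralSeries G M` is `γ_{M+1}(G)`. -/
theorem lowerCentralSeries_le_of_subnormal_chain {Γ : Type*} [Group Γ] (p m n : ℕ)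
    (hp : p.Prime) (hm : 1 ≤ m) (hn : 1 ≤ n)
    (G : ℕ → Subgroup Γ) (hG0 : G 0 = ⊤)
    (hle : ∀ i < n, G (i + 1) ≤ G i)
    (hnorm : ∀ i < n, ((G (i + 1)).subgroupOf (G i)).Normal)
    (hidx : ∀ i < n, (G (i + 1)).relIndex (G i) = p ^ m) :
    (⊤ : Subgroup Γ).lowerCentralSeries (m * (p ^ (m * n) - 1) / (p ^ m - 1)) ≤ G n := by
  -- rewrite the exponent as a geometric sum
  have h2 : 2 ≤ p ^ m := by
    calc 2 ≤ p := hp.two_le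
    _ = p ^ 1 := (pow_one p).symm
    _ ≤ p ^ m := Nat.pow_le_pow_right hp.pos hm
  have hdvd : p ^ m - 1 ∣ p ^ (m * n) - 1 := by
    have h := Nat.sub_dvd_pow_sub_pow (p ^ m) 1 n
    rwa [one_pow, ← pow_mul] at h
  have hM : m * (p ^ (m * n) - 1) / (p ^ m - 1)
      = m * ∑ i ∈ Finset.range n, p ^ (m * i) := by
    rw [Nat.mul_div_assoc m hdvd]
    congr 1
    calc (p ^ (m * n) - 1) / (p ^ m - 1) = ((p ^ m) ^ n - 1) / (p ^ m - 1) := by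
          rw [pow_mul]
      _ = ∑ i ∈ Finset.range n, (p ^ m) ^ i := (Nat.geomSum_eq h2 n).symm
      _ = ∑ i ∈ Finset.range n, p ^ (m * i) := by
          refine Finset.sum_congr rfl fun i _ => ?_
          rw [← pow_mul]
  rw [hM]
  obtain ⟨K, hKnorm, hKle, hKidx⟩ := key_chain hp n Γ G hG0 hle hnorm hidx
  haveI := hKnorm
  set e := m * ∑ i ∈ Finset.range n, p ^ (m * i) with he
  have hbot : (⊤ : Subgroup (Γ ⧸ K)).lowerCentralSeries e = ⊥ := by
    refine lcs_eq_bot_of_card_dvd hp ?_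
    rwa [← Subgroup.index_eq_card]
  have hmap := Subgroup.lowerCentralSeries.map (QuotientGroup.mk' K) e
  rw [hbot] at hmap
  have hker : (⊤ : Subgroup Γ).lowerCentralSeries e ≤ K := by
    intro x hx
    have hx' := hmap (Subgroup.mem_map_of_mem (QuotientGroup.mk' K) hx)
    rw [Subgroup.mem_bot] at hx'
    exact (QuotientGroup.eq_one_iff x).mp hx'
  exact hker.trans hKle
end

section
/- Let F be the free group on two generators a_1, a_2, and define sequences of elements by x_1 = a_1, y_1 = a_2, and inductively x_k = [x_{k−1}, y_{k−1}] and y_k = [x_{k−1}, y_{k−1}^{−1}]. Then for every k ≥ 1, the elements x_k and y_k generate a free subgroup of F of rank 2; in particular x_k ≠ 1 and y_k ≠ 1 for all k ≥ 1. -/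
open FreeGroup

open scoped commutatorElement

namespace IterComm

abbrev L := List (Bool × Bool)

def linv (p : Bool × Bool) : Bool × Bool := (p.1, !p.2)

lemma reduce_length_le (W : L) : (reduce W).length ≤ W.length :=
  Red.length_le (reduce.red)

lemma reduce_cons_of_reduced (x : Bool × Bool) (W : L) (h : reduce W = W) :
    reduce (x :: W) = (match W with
      | [] => [x]
      | y :: t => if x.1 = y.1 ∧ x.2 = !y.2 then t else x :: y :: t) := by
  rw [reduce.cons, h]
  cases W <;> rfl

lemma reduce_tail (W : L) (h : reduce W = W) : reduce W.tail = W.tail := by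
  cases W with
  | nil => rfl
  | cons p t =>
    show reduce t = t
    rw [reduce.cons] at h
    rcases hrt : reduce t with _ | ⟨hd, tl⟩
    · rw [hrt] at h
      simp only [List.cons.injEq] at h
      exact h.2
    · rw [hrt] at h
      by_cases hc : p.1 = hd.1 ∧ p.2 = !hd.2
      · simp only [hc, and_self, if_true] at h
        have h1 := reduce_length_le t
        rw [hrt, h] at h1
        simp at h1
      · simp only [hc, if_false, List.cons.injEq, true_and] at h
        exact h

lemma key (c d : Bool × Bool) (hcd : c.1 ≠ d.1) (W : L)
    (hW : reduce W = W) (hW2 : W.take 2 ≠ [d, c]) :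
    (reduce (c :: d :: linv c :: linv d :: W)).take 2 = [c, d] := by
  have hdc : ¬(d.1 = (linv c).1 ∧ d.2 = !(linv c).2) := by
    rintro ⟨h1, -⟩; exact hcd (by simpa [linv] using h1.symm)
  have hcd' : ¬(c.1 = d.1 ∧ c.2 = !d.2) := by
    rintro ⟨h1, -⟩; exact hcd h1
  rcases W with _ | ⟨p, t⟩
  · have r1 : reduce [linv d] = [linv d] := reduce_singleton _
    have r2 : reduce [linv c, linv d] = [linv c, linv d] := by
      rw [reduce.cons, r1]; dsimp only
      rw [if_neg (by rintro ⟨h1, -⟩; exact hcd h1)]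
    have r3 : reduce [d, linv c, linv d] = [d, linv c, linv d] := by
      rw [reduce.cons, r2]; dsimp only; rw [if_neg hdc]
    rw [reduce.cons, r3]; dsimp only; rw [if_neg hcd']; rfl
  · by_cases hpd : p = d
    · subst hpd
      have ht : reduce t = t := reduce_tail _ hW
      have r1 : reduce (linv p :: p :: t) = t := by
        rw [reduce.cons, hW]; dsimp only; rw [if_pos (by simp [linv])]
      rcases t with _ | ⟨q, s⟩
      · have r2 : reduce [linv c, linv p, p] = [linv c] := by
          rw [reduce.cons, r1]
        have r3 : reduce [p, linv c, linv p, p] = [p, linv c] := by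
          rw [reduce.cons, r2]; dsimp only; rw [if_neg hdc]
        rw [reduce.cons, r3]; dsimp only; rw [if_neg hcd']; rfl
      · have hqc : q ≠ c := by
          intro h; exact hW2 (by simp [h])
        have r2 : reduce (linv c :: linv p :: p :: q :: s) = linv c :: q :: s := by
          rw [reduce.cons, r1]; dsimp only; rw [if_neg]
          rintro ⟨h1, h2⟩
          exact hqc (Prod.ext h1.symm (by simpa [linv] using h2.symm))
        have r3 : reduce (p :: linv c :: linv p :: p :: q :: s)
            = p :: linv c :: q :: s := by
          rw [reduce.cons, r2]; dsimp only; rw [if_neg hdc]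
        rw [reduce.cons, r3]; dsimp only; rw [if_neg hcd']; rfl
    · have r1 : reduce (linv d :: p :: t) = linv d :: p :: t := by
        rw [reduce.cons, hW]; dsimp only; rw [if_neg]
        rintro ⟨h1, h2⟩
        exact hpd (Prod.ext (by simpa [linv] using h1.symm)
          (by simp [linv] at h2; simp [h2]))
      have r2 : reduce (linv c :: linv d :: p :: t)
          = linv c :: linv d :: p :: t := by
        rw [reduce.cons, r1]; dsimp only; rw [if_neg (by rintro ⟨h1, -⟩; exact hcd h1)]
      have r3 : reduce (d :: linv c :: linv d :: p :: t)
          = d :: linv c :: linv d :: p :: t := by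
        rw [reduce.cons, r2]; dsimp only; rw [if_neg hdc]
      rw [reduce.cons, r3]; dsimp only; rw [if_neg hcd']; rfl

abbrev A : Bool × Bool := (false, true)
abbrev B : Bool × Bool := (true, true)

def u : FreeGroup Bool := ⁅FreeGroup.of false, FreeGroup.of true⁆
def v : FreeGroup Bool := ⁅FreeGroup.of false, (FreeGroup.of true)⁻¹⁆

lemma hu : u = FreeGroup.mk [A, B, linv A, linv B] := by
  simp [u, commutatorElement_def, FreeGroup.of, FreeGroup.mul_mk, FreeGroup.inv_mk,
    FreeGroup.invRev, linv]

lemma hv : v = FreeGroup.mk [A, linv B, linv A, B] := by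
  simp [v, commutatorElement_def, FreeGroup.of, FreeGroup.mul_mk, FreeGroup.inv_mk,
    FreeGroup.invRev, linv]

lemma hu' : u⁻¹ = FreeGroup.mk [B, A, linv B, linv A] := by
  rw [hu, FreeGroup.inv_mk]
  simp [FreeGroup.invRev, linv]

lemma hv' : v⁻¹ = FreeGroup.mk [linv B, A, B, linv A] := by
  rw [hv, FreeGroup.inv_mk]
  simp [FreeGroup.invRev, linv]

/-- the ping-pong generators -/
def pg : Bool → FreeGroup Bool := fun i => if i then v else u

def Xs : Bool → Set (FreeGroup Bool) :=
  fun i => {w | w.toWord.take 2 = [A, if i then linv B else B]}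

def Ys : Bool → Set (FreeGroup Bool) :=
  fun i => {w | w.toWord.take 2 = [if i then linv B else B, A]}

lemma mul_toWord (g w : FreeGroup Bool) (Lg : L) (hg : g = FreeGroup.mk Lg) :
    (g * w).toWord = reduce (Lg ++ w.toWord) := by
  conv_lhs => rw [hg, ← FreeGroup.mk_toWord (x := w)]
  rw [FreeGroup.mul_mk, FreeGroup.toWord_mk]

lemma psi_inj : Function.Injective
    (FreeGroup.lift pg : FreeGroup Bool →* FreeGroup Bool) := by
  apply FreeGroup.injective_lift_of_ping_pong pg Xs Ys
  · intro i
    refine ⟨FreeGroup.mk [A, if i then linv B else B], ?_⟩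
    cases i <;> rfl
  · intro i j hij
    rw [Function.onFun, Set.disjoint_left]
    intro w hwi hwj
    rw [Xs, Set.mem_setOf_eq] at hwi hwj
    rw [hwi] at hwj
    cases i <;> cases j <;> simp_all [linv]
  · intro i j hij
    rw [Function.onFun, Set.disjoint_left]
    intro w hwi hwj
    rw [Ys, Set.mem_setOf_eq] at hwi hwj
    rw [hwi] at hwj
    cases i <;> cases j <;> simp_all [linv]
  · intro i j
    rw [Set.disjoint_left]
    intro w hwi hwj
    rw [Xs, Set.mem_setOf_eq] at hwi
    rw [Ys, Set.mem_setOf_eq] at hwj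
    rw [hwi] at hwj
    cases i <;> cases j <;> simp_all [linv]
  · rintro i _ ⟨w, hw, rfl⟩
    rw [Set.mem_compl_iff, Ys, Set.mem_setOf_eq] at hw
    show ((pg i) * w).toWord.take 2 = _
    cases i
    · rw [pg, if_neg Bool.false_ne_true, mul_toWord u w _ hu]
      exact key A B (by simp) w.toWord (FreeGroup.reduce_toWord w) hw
    · rw [pg, if_pos rfl, mul_toWord v w _ hv]
      exact key A (linv B) (by simp [linv]) w.toWord (FreeGroup.reduce_toWord w) hw
  · rintro i _ ⟨w, hw, rfl⟩
    rw [Set.mem_compl_iff, Xs, Set.mem_setOf_eq] at hw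
    show ((pg i)⁻¹ * w).toWord.take 2 = _
    cases i
    · rw [pg, if_neg Bool.false_ne_true, mul_toWord u⁻¹ w _ hu']
      exact key B A (by simp) w.toWord (FreeGroup.reduce_toWord w) hw
    · rw [pg, if_pos rfl, mul_toWord v⁻¹ w _ hv']
      exact key (linv B) A (by simp [linv]) w.toWord (FreeGroup.reduce_toWord w) hw

end IterComm


/-- Let `F` be the free group on two generators `a_1, a_2` (modelled as
`FreeGroup Bool` with `a_1 = of false`, `a_2 = of true`), and define `x_1 = a_1`,
`y_1 = a_2`, `x_{k+1} = [x_k, y_k]`, `y_{k+1} = [x_k, y_k⁻¹]`.  Then for every `k ≥ 1` the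
elements `x_k` and `y_k` freely generate a free subgroup of rank `2` (i.e. the homomorphism
from the rank‑2 free group sending the two generators to `x_k` and `y_k` is injective); in
particular `x_k ≠ 1` and `y_k ≠ 1`. -/
theorem iterated_commutators_generate_free_subgroup
    (x y : ℕ → FreeGroup Bool)
    (hx1 : x 1 = FreeGroup.of false) (hy1 : y 1 = FreeGroup.of true)
    (hx : ∀ k, 1 ≤ k → x (k + 1) = ⁅x k, y k⁆)
    (hy : ∀ k, 1 ≤ k → y (k + 1) = ⁅x k, (y k)⁻¹⁆)
    (k : ℕ) (hk : 1 ≤ k) :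
    Function.Injective
        (FreeGroup.lift (fun c : Bool => if c then y k else x k) :
          FreeGroup Bool →* FreeGroup Bool) ∧
      x k ≠ 1 ∧ y k ≠ 1 := by

  have main : Function.Injective
      (FreeGroup.lift (fun c : Bool => if c then y k else x k) :
        FreeGroup Bool →* FreeGroup Bool) := by
    induction k, hk using Nat.le_induction with
    | base =>
      have e : (fun c : Bool => if c then y 1 else x 1)
          = fun c : Bool => if c then FreeGroup.of true else FreeGroup.of false := by
        funext c; rw [hx1, hy1]
      rw [e]
      have e2 : (FreeGroup.lift
            (fun c : Bool => if c then FreeGroup.of true else FreeGroup.of false))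
          = MonoidHom.id (FreeGroup Bool) := by
        ext c; cases c <;> simp
      rw [e2]
      exact fun a b h => h
    | succ n hn ih =>
      have e : (FreeGroup.lift (fun c : Bool => if c then y (n+1) else x (n+1)) :
            FreeGroup Bool →* FreeGroup Bool)
          = (FreeGroup.lift (fun c : Bool => if c then y n else x n)).comp
              (FreeGroup.lift IterComm.pg) := by
        ext c
        cases c <;> simp [IterComm.pg, IterComm.u, IterComm.v, hx n hn, hy n hn, map_commutatorElement]
      rw [e, MonoidHom.coe_comp]
      exact ih.comp IterComm.psi_inj
  refine ⟨main, ?_, ?_⟩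
  · intro h
    have h2 : (FreeGroup.lift (fun c : Bool => if c then y k else x k) :
        FreeGroup Bool →* FreeGroup Bool) (FreeGroup.of false)
        = (FreeGroup.lift (fun c : Bool => if c then y k else x k) :
        FreeGroup Bool →* FreeGroup Bool) 1 := by
      simp [h]
    exact FreeGroup.of_ne_one false (main h2)
  · intro h
    have h2 : (FreeGroup.lift (fun c : Bool => if c then y k else x k) :
        FreeGroup Bool →* FreeGroup Bool) (FreeGroup.of true)
        = (FreeGroup.lift (fun c : Bool => if c then y k else x k) :
        FreeGroup Bool →* FreeGroup Bool) 1 := by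
      simp [h]
    exact FreeGroup.of_ne_one true (main h2)
end

section
/- Let F be the free group on a set S, let ℤF be its integral group ring, and let ε : ℤF → ℤ be the augmentation map. For each s ∈ S there exists a unique ℤ-linear map D_s : ℤF → ℤF satisfying D_s(xy) = D_s(x)·ε(y) + x·D_s(y) for all x, y ∈ ℤF, together with D_s(s) = 1 and D_s(s') = 0 for every s' ∈ S with s' ≠ s. -/
namespace FoxProof

variable {S : Type*}

/-- Auxiliary group: pairs `(g, a)` with `(g,a)(h,b) = (gh, a + g·b)`. -/
structure Aux (S : Type*) where
  g : FreeGroup S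
  a : MonoidAlgebra ℤ (FreeGroup S)

@[ext] theorem Aux.ext' {p q : Aux S} (h1 : p.g = q.g) (h2 : p.a = q.a) : p = q := by
  cases p; cases q; simp_all

noncomputable instance : Group (Aux S) where
  mul p q := ⟨p.g * q.g, p.a + MonoidAlgebra.of ℤ (FreeGroup S) p.g * q.a⟩
  one := ⟨1, 0⟩
  inv p := ⟨p.g⁻¹, -(MonoidAlgebra.of ℤ (FreeGroup S) p.g⁻¹ * p.a)⟩
  mul_assoc p q r := by
    refine Aux.ext' (mul_assoc _ _ _) ?_
    show (p.a + _ * q.a) + MonoidAlgebra.of ℤ (FreeGroup S) (p.g * q.g) * r.a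
        = p.a + _ * (q.a + _ * r.a)
    rw [map_mul, mul_add, mul_assoc, add_assoc]
  one_mul p := by
    refine Aux.ext' (one_mul _) ?_
    show (0 : MonoidAlgebra ℤ (FreeGroup S)) + MonoidAlgebra.of ℤ (FreeGroup S) 1 * p.a = p.a
    rw [map_one, one_mul, zero_add]
  mul_one p := by
    refine Aux.ext' (mul_one _) ?_
    show p.a + MonoidAlgebra.of ℤ (FreeGroup S) p.g * 0 = p.a
    rw [mul_zero, add_zero]
  inv_mul_cancel p := by
    refine Aux.ext' (inv_mul_cancel _) ?_
    show -(MonoidAlgebra.of ℤ (FreeGroup S) p.g⁻¹ * p.a)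
        + MonoidAlgebra.of ℤ (FreeGroup S) p.g⁻¹ * p.a = (0 : MonoidAlgebra ℤ (FreeGroup S))
    rw [neg_add_cancel]

@[simp] theorem Aux.mul_g (p q : Aux S) : (p * q).g = p.g * q.g := rfl
@[simp] theorem Aux.mul_a (p q : Aux S) :
    (p * q).a = p.a + MonoidAlgebra.of ℤ (FreeGroup S) p.g * q.a := rfl
@[simp] theorem Aux.one_g : (1 : Aux S).g = 1 := rfl
@[simp] theorem Aux.one_a : (1 : Aux S).a = 0 := rfl

/-- projection is a hom -/
def Aux.fst : Aux S →* FreeGroup S where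
  toFun := Aux.g
  map_one' := rfl
  map_mul' _ _ := rfl

variable [DecidableEq S]

noncomputable def φ (s : S) : FreeGroup S →* Aux S :=
  FreeGroup.lift fun t => ⟨FreeGroup.of t, if t = s then 1 else 0⟩

theorem φ_g (s : S) (g : FreeGroup S) : (φ s g).g = g := by
  have : (Aux.fst).comp (φ s) = MonoidHom.id (FreeGroup S) := by
    apply FreeGroup.ext_hom
    intro t
    simp [φ, Aux.fst]
  exact DFunLike.congr_fun this g

/-- The Fox derivative at group elements. -/
noncomputable def d (s : S) (g : FreeGroup S) : MonoidAlgebra ℤ (FreeGroup S) := (φ s g).a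

theorem d_mul (s : S) (g h : FreeGroup S) :
    d s (g * h) = d s g + MonoidAlgebra.of ℤ (FreeGroup S) g * d s h := by
  unfold d
  rw [map_mul, Aux.mul_a, φ_g]

theorem d_of (s t : S) : d s (FreeGroup.of t) = if t = s then 1 else 0 := by
  unfold d φ
  rw [FreeGroup.lift_apply_of]

theorem d_one (s : S) : d s (1 : FreeGroup S) = 0 := by
  unfold d; rw [map_one, Aux.one_a]

theorem d_inv (s : S) (g : FreeGroup S) :
    d s g⁻¹ = -(MonoidAlgebra.of ℤ (FreeGroup S) g⁻¹ * d s g) := by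
  have h := d_mul s g⁻¹ g
  rw [inv_mul_cancel, d_one] at h
  exact eq_neg_of_add_eq_zero_left h.symm

end FoxProof

open FoxProof

/-- Let `F` be the free group on a set `S`, `ℤF` its integral group ring
(`MonoidAlgebra ℤ F`), and `ε : ℤF → ℤ` the augmentation map (the `ℤ`-linear map with
`ε(g) = 1` for all `g ∈ F`, given here by its defining property).  For each `s ∈ S` there
is a unique `ℤ`-linear map `D_s : ℤF → ℤF` satisfying `D_s(xy) = D_s(x)·ε(y) + x·D_s(y)`
for all `x, y ∈ ℤF`, together with `D_s(s) = 1` and `D_s(s') = 0` for `s' ∈ S`, `s' ≠ s`. -/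
theorem existsUnique_freeDerivative {S : Type*}
    (ε : MonoidAlgebra ℤ (FreeGroup S) →ₗ[ℤ] ℤ)
    (hε : ∀ g : FreeGroup S, ε (MonoidAlgebra.of ℤ (FreeGroup S) g) = 1)
    (s : S) :
    ∃! D : MonoidAlgebra ℤ (FreeGroup S) →ₗ[ℤ] MonoidAlgebra ℤ (FreeGroup S),
      (∀ x y, D (x * y) = ε y • D x + x * D y) ∧
      D (MonoidAlgebra.of ℤ (FreeGroup S) (FreeGroup.of s)) = 1 ∧
      ∀ s' : S, s' ≠ s → D (MonoidAlgebra.of ℤ (FreeGroup S) (FreeGroup.of s')) = 0 := by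
  classical
  -- the candidate derivative
  let D : MonoidAlgebra ℤ (FreeGroup S) →ₗ[ℤ] MonoidAlgebra ℤ (FreeGroup S) :=
    (Finsupp.lsum ℤ fun g => LinearMap.toSpanSingleton ℤ _ (d s g)) ∘ₗ
      (MonoidAlgebra.coeffLinearEquiv ℤ).toLinearMap
  have hD_of : ∀ g : FreeGroup S, D (MonoidAlgebra.of ℤ (FreeGroup S) g) = d s g := by
    intro g
    simp [D]
  have hDprod : ∀ x y, D (x * y) = ε y • D x + x * D y := by
    have hbase : ∀ g h : FreeGroup S,
        D (MonoidAlgebra.of ℤ (FreeGroup S) g * MonoidAlgebra.of ℤ (FreeGroup S) h)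
        = ε (MonoidAlgebra.of ℤ (FreeGroup S) h) • D (MonoidAlgebra.of ℤ (FreeGroup S) g)
          + MonoidAlgebra.of ℤ (FreeGroup S) g * D (MonoidAlgebra.of ℤ (FreeGroup S) h) := by
      intro g h
      rw [← map_mul, hD_of, hD_of, hD_of, d_mul, hε, one_smul]
    intro x y
    induction x using MonoidAlgebra.induction_on with
    | of g =>
      induction y using MonoidAlgebra.induction_on with
      | of h => exact hbase g h
      | add y1 y2 h1 h2 =>
        simp only [mul_add, map_add, h1, h2, add_smul]
        abel
      | smul r y h =>
        simp only [mul_smul_comm, map_smul, h, smul_add, smul_smul, smul_eq_mul]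
        try module
    | add x1 x2 h1 h2 =>
      simp only [add_mul, map_add, h1, h2, smul_add]
      abel
    | smul r x h =>
      simp only [smul_mul_assoc, map_smul, h, smul_add, smul_smul, smul_eq_mul]
      try module
  -- uniqueness helper
  have key : ∀ D' : MonoidAlgebra ℤ (FreeGroup S) →ₗ[ℤ] MonoidAlgebra ℤ (FreeGroup S),
      (∀ x y, D' (x * y) = ε y • D' x + x * D' y) →
      D' (MonoidAlgebra.of ℤ (FreeGroup S) (FreeGroup.of s)) = 1 →
      (∀ s' : S, s' ≠ s → D' (MonoidAlgebra.of ℤ (FreeGroup S) (FreeGroup.of s')) = 0) →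
      ∀ g : FreeGroup S, D' (MonoidAlgebra.of ℤ (FreeGroup S) g) = d s g := by
    intro D' hrule hs hs'
    have hone : D' 1 = 0 := by
      have h := hrule 1 1
      have hε1 : ε 1 = 1 := by
        rw [← map_one (MonoidAlgebra.of ℤ (FreeGroup S))]; exact hε 1
      rw [mul_one, hε1, one_smul, one_mul] at h
      simpa using h
    have hinv : ∀ g : FreeGroup S, D' (MonoidAlgebra.of ℤ (FreeGroup S) g⁻¹)
        = -(MonoidAlgebra.of ℤ (FreeGroup S) g⁻¹ * D' (MonoidAlgebra.of ℤ (FreeGroup S) g)) := by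
      intro g
      have h0 := hrule (MonoidAlgebra.of ℤ (FreeGroup S) g⁻¹) (MonoidAlgebra.of ℤ (FreeGroup S) g)
      rw [← map_mul, inv_mul_cancel, map_one, hone, hε, one_smul] at h0
      exact eq_neg_of_add_eq_zero_left h0.symm
    intro g
    induction g using FreeGroup.induction_on with
    | C1 => rw [map_one, hone, d_one]
    | of t =>
      show D' (MonoidAlgebra.of ℤ (FreeGroup S) (FreeGroup.of t)) = d s (FreeGroup.of t)
      rw [d_of]
      by_cases h : t = s
      · subst h; rw [if_pos rfl]; exact hs
      · rw [if_neg h]; exact hs' t h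
    | inv_of t ih =>
      show D' (MonoidAlgebra.of ℤ (FreeGroup S) (FreeGroup.of t)⁻¹) = d s (FreeGroup.of t)⁻¹
      rw [hinv, ih, d_inv]
    | mul x y ihx ihy =>
      rw [map_mul, hrule, hε, one_smul, ihx, ihy, ← d_mul]
  refine ⟨D, ⟨hDprod, ?_, ?_⟩, ?_⟩
  · rw [hD_of, d_of, if_pos rfl]
  · intro s' hne
    rw [hD_of, d_of, if_neg hne]
  · rintro D' ⟨hrule, hs, hs'⟩
    apply MonoidAlgebra.lhom_ext'
    intro g
    apply LinearMap.ext
    intro b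
    simp only [LinearMap.comp_apply, MonoidAlgebra.lsingle_apply]
    have hsingle : (MonoidAlgebra.single g b : MonoidAlgebra ℤ (FreeGroup S))
        = b • MonoidAlgebra.of ℤ (FreeGroup S) g := by
      simp
    rw [hsingle, map_smul, map_smul]
    exact congrArg (b • ·) ((key D' hrule hs hs' g).trans (hD_of g).symm)
end

section
/- Let F be the free group on a set S with augmentation map ε : ℤF → ℤ, and for each s ∈ S let D_s : ℤF → ℤF be a ℤ-linear map satisfying D_s(xy) = D_s(x)·ε(y) + x·D_s(y) for all x, y ∈ ℤF, with D_s(s) = 1 and D_s(s') = 0 for s' ∈ S, s' ≠ s. If k ≥ 2 and g ∈ γ_k(F), then for every j with 1 ≤ j ≤ k − 1 and every choice of s_1, …, s_j ∈ S, one has ε(D_{s_1}(D_{s_2}(⋯(D_{s_j}(g))⋯))) = 0. -/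
/-- Let `F` be the free group on a set `S`, `ε : ℤF → ℤ` the
augmentation map, and for each `s ∈ S` let `D_s : ℤF → ℤF` be a `ℤ`-linear map with
`D_s(xy) = D_s(x)·ε(y) + x·D_s(y)`, `D_s(s) = 1`, and `D_s(s') = 0` for `s' ≠ s`.
If `k ≥ 2` and `g ∈ γ_k(F)` (Mathlib's `lowerCentralSeries F (k-1)`), then for every
`j` with `1 ≤ j ≤ k − 1` and every `s_1, …, s_j ∈ S` (a list `l` of length `j`), the
iterated free derivative `D_{s_1}(D_{s_2}(⋯(D_{s_j}(g))⋯))` has augmentation `0`. -/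
theorem augmentation_freeDerivative_eq_zero_of_mem_lowerCentralSeries {S : Type*}
    (ε : MonoidAlgebra ℤ (FreeGroup S) →ₗ[ℤ] ℤ)
    (hε : ∀ g : FreeGroup S, ε (MonoidAlgebra.of ℤ (FreeGroup S) g) = 1)
    (D : S → MonoidAlgebra ℤ (FreeGroup S) →ₗ[ℤ] MonoidAlgebra ℤ (FreeGroup S))
    (hD : ∀ s x y, D s (x * y) = ε y • D s x + x * D s y)
    (hD1 : ∀ s : S, D s (MonoidAlgebra.of ℤ (FreeGroup S) (FreeGroup.of s)) = 1)
    (hD0 : ∀ s s' : S, s' ≠ s → D s (MonoidAlgebra.of ℤ (FreeGroup S) (FreeGroup.of s')) = 0)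
    (k : ℕ) (hk : 2 ≤ k) (g : FreeGroup S)
    (hg : g ∈ (⊤ : Subgroup (FreeGroup S)).lowerCentralSeries (k - 1))
    (l : List S) (hl : 1 ≤ l.length) (hl' : l.length ≤ k - 1) :
    ε ((l.foldr (fun s f => (D s).comp f) LinearMap.id)
        (MonoidAlgebra.of ℤ (FreeGroup S) g)) = 0 := by
  classical
  -- ε is multiplicative
  have hεeq : ε = (MonoidAlgebra.lift ℤ ℤ (FreeGroup S) 1).toLinearMap := by
    apply MonoidAlgebra.lhom_ext'
    intro x
    apply LinearMap.ext_ring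
    simpa using hε x
  have hεmul : ∀ x y, ε (x * y) = ε x * ε y := by
    intro x y
    rw [hεeq]
    exact map_mul (MonoidAlgebra.lift ℤ ℤ (FreeGroup S) 1) x y
  have hε1 : ε (1 : MonoidAlgebra ℤ (FreeGroup S)) = 1 := by
    simpa [map_one] using hε 1
  set I : Submodule ℤ (MonoidAlgebra ℤ (FreeGroup S)) := LinearMap.ker ε with hIdef
  have hImem : ∀ x, x ∈ I ↔ ε x = 0 := fun x => LinearMap.mem_ker
  have hIr : ∀ x ∈ I, ∀ a, x * a ∈ I := by
    intro x hx a
    rw [hImem] at hx ⊢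
    rw [hεmul, hx, zero_mul]
  have hIl : ∀ x ∈ I, ∀ a, a * x ∈ I := by
    intro x hx a
    rw [hImem] at hx ⊢
    rw [hεmul, hx, mul_zero]
  have hpow_le : ∀ n : ℕ, I ^ (n + 1) ≤ I := by
    intro n
    induction n with
    | zero => rw [pow_one]
    | succ n ih =>
      rw [pow_succ]
      exact Submodule.mul_le.2 fun x hx y hy => hIr x (ih hx) y
  have hpow_r : ∀ (n : ℕ) (a : MonoidAlgebra ℤ (FreeGroup S)),
      ∀ x ∈ I ^ (n + 1), x * a ∈ I ^ (n + 1) := by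
    intro n a x hx
    rw [pow_succ] at hx ⊢
    refine Submodule.mul_induction_on hx (fun y hy z hz => ?_) (fun p q hp hq => ?_)
    · rw [mul_assoc]; exact Submodule.mul_mem_mul hy (hIr z hz a)
    · rw [add_mul]; exact add_mem hp hq
  have hpow_l : ∀ (n : ℕ) (a : MonoidAlgebra ℤ (FreeGroup S)),
      ∀ x ∈ I ^ (n + 1), a * x ∈ I ^ (n + 1) := by
    intro n a x hx
    rw [pow_succ'] at hx ⊢
    refine Submodule.mul_induction_on hx (fun y hy z hz => ?_) (fun p q hp hq => ?_)
    · rw [← mul_assoc]; exact Submodule.mul_mem_mul (hIl y hy a) hz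
    · rw [mul_add]; exact add_mem hp hq
  -- main algebraic fact : γ_{n+1} ⊆ 1 + I^{n+1}
  have key : ∀ n : ℕ, ∀ x : FreeGroup S, x ∈ (⊤ : Subgroup (FreeGroup S)).lowerCentralSeries n →
      MonoidAlgebra.of ℤ (FreeGroup S) x - 1 ∈ I ^ (n + 1) := by
    intro n
    induction n with
    | zero =>
      intro x _
      rw [pow_one, hImem, map_sub, hε, hε1, sub_self]
    | succ n ih =>
      intro x hx
      rw [Subgroup.lowerCentralSeries_succ] at hx
      refine Subgroup.closure_induction (fun y hy => ?_) ?_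
        (fun a b _ _ ha hb => ?_) (fun a _ ha => ?_) hx
      · -- generators : commutators
        obtain ⟨p, hp, q, -, rfl⟩ := hy
        have h1 : MonoidAlgebra.of ℤ (FreeGroup S) p - 1 ∈ I ^ (n + 1) := ih p hp
        have h2 : MonoidAlgebra.of ℤ (FreeGroup S) q - 1 ∈ I := by
          rw [hImem, map_sub, hε, hε1, sub_self]
        set a := MonoidAlgebra.of ℤ (FreeGroup S) p with hadef
        set b := MonoidAlgebra.of ℤ (FreeGroup S) q with hbdef
        have hcomm : MonoidAlgebra.of ℤ (FreeGroup S) (p * q * p⁻¹ * q⁻¹) - 1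
            = ((a - 1) * (b - 1) - (b - 1) * (a - 1)) *
              MonoidAlgebra.of ℤ (FreeGroup S) ((q * p)⁻¹) := by
          have hba : b * a * MonoidAlgebra.of ℤ (FreeGroup S) ((q * p)⁻¹) = 1 := by
            rw [hadef, hbdef, ← map_mul, ← map_mul, mul_inv_cancel, map_one]
          have hab : a * b * MonoidAlgebra.of ℤ (FreeGroup S) ((q * p)⁻¹)
              = MonoidAlgebra.of ℤ (FreeGroup S) (p * q * p⁻¹ * q⁻¹) := by
            rw [hadef, hbdef, ← map_mul, ← map_mul]
            congr 1
            group
          have hexp : (a - 1) * (b - 1) - (b - 1) * (a - 1) = a * b - b * a := by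
            noncomm_ring
          rw [hexp, sub_mul, hab, hba]
        rw [commutatorElement_def, hcomm]
        refine hpow_r (n + 1) _ _ ?_
        refine sub_mem ?_ ?_
        · rw [pow_succ]
          exact Submodule.mul_mem_mul h1 h2
        · rw [pow_succ']
          exact Submodule.mul_mem_mul h2 h1
      · rw [map_one, sub_self]; exact zero_mem _
      · -- multiplication
        have : MonoidAlgebra.of ℤ (FreeGroup S) (a * b) - 1
            = (MonoidAlgebra.of ℤ (FreeGroup S) a - 1) * MonoidAlgebra.of ℤ (FreeGroup S) b
              + (MonoidAlgebra.of ℤ (FreeGroup S) b - 1) := by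
          rw [map_mul]; noncomm_ring
        rw [this]
        exact add_mem (hpow_r (n + 1) _ _ ha) hb
      · -- inverse
        have : MonoidAlgebra.of ℤ (FreeGroup S) a⁻¹ - 1
            = -(MonoidAlgebra.of ℤ (FreeGroup S) a⁻¹ *
                (MonoidAlgebra.of ℤ (FreeGroup S) a - 1)) := by
          rw [mul_sub, ← map_mul, inv_mul_cancel, map_one, mul_one, neg_sub]
        rw [this]
        exact neg_mem (hpow_l (n + 1) _ _ ha)
  -- D s kills 1
  have hD1' : ∀ s, D s (1 : MonoidAlgebra ℤ (FreeGroup S)) = 0 := by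
    intro s
    have h := hD s 1 1
    rw [mul_one, hε1, one_smul, one_mul] at h
    exact (left_eq_add.mp h)
  -- derivatives lower the power
  have hDpow : ∀ (s : S) (n : ℕ), ∀ x ∈ I ^ (n + 2), D s x ∈ I ^ (n + 1) := by
    intro s n
    induction n with
    | zero =>
      intro x hx
      rw [show (2 : ℕ) = 1 + 1 from rfl, pow_succ', pow_one] at hx
      rw [pow_one]
      refine Submodule.mul_induction_on hx (fun y hy z hz => ?_) (fun p q hp hq => ?_)
      · rw [hD s y z, (hImem z).mp hz, zero_smul, zero_add]
        exact hIr y hy (D s z)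
      · rw [map_add]; exact add_mem hp hq
    | succ n ih =>
      intro x hx
      rw [show n + 1 + 2 = (n + 2) + 1 from rfl, pow_succ'] at hx
      refine Submodule.mul_induction_on hx (fun y hy z hz => ?_) (fun p q hp hq => ?_)
      · have hz' : ε z = 0 := (hImem z).mp (hpow_le (n + 1) hz)
        rw [hD s y z, hz', zero_smul, zero_add]
        rw [pow_succ']
        exact Submodule.mul_mem_mul hy (ih z hz)
      · rw [map_add]; exact add_mem hp hq
  -- iterated derivatives
  have hiter : ∀ (l : List S) (m : ℕ) (x : MonoidAlgebra ℤ (FreeGroup S)),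
      x ∈ I ^ (l.length + m + 1) →
      (l.foldr (fun s f => (D s).comp f) LinearMap.id) x ∈ I ^ (m + 1) := by
    intro l
    induction l with
    | nil => intro m x hx; simpa using hx
    | cons s l' ih =>
      intro m x hx
      have hx' : x ∈ I ^ (l'.length + (m + 1) + 1) := by
        have : l'.length + (m + 1) + 1 = (s :: l').length + m + 1 := by
          simp; omega
        rw [this]; exact hx
      have := ih (m + 1) x hx'
      simpa using hDpow s m _ this
  -- foldr of 1 is 0 for nonempty lists
  have hfold1 : ∀ (l : List S), l ≠ [] →
      (l.foldr (fun s f => (D s).comp f) LinearMap.id) (1 : MonoidAlgebra ℤ (FreeGroup S)) = 0 := by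
    intro l hlne
    induction l with
    | nil => exact absurd rfl hlne
    | cons s l' ih =>
      cases l' with
      | nil => simpa using hD1' s
      | cons t l'' =>
        have h0 := ih (by simp)
        simp only [List.foldr_cons, LinearMap.comp_apply] at h0 ⊢
        rw [h0, map_zero]
  -- assemble
  have hg' : MonoidAlgebra.of ℤ (FreeGroup S) g - 1 ∈ I ^ k := by
    have := key (k - 1) g hg
    rwa [show k - 1 + 1 = k from by omega] at this
  have hmem : (l.foldr (fun s f => (D s).comp f) LinearMap.id)
      (MonoidAlgebra.of ℤ (FreeGroup S) g - 1) ∈ I ^ (k - l.length) := by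
    have h1 : MonoidAlgebra.of ℤ (FreeGroup S) g - 1 ∈ I ^ (l.length + (k - l.length - 1) + 1) := by
      rwa [show l.length + (k - l.length - 1) + 1 = k from by omega]
    have := hiter l (k - l.length - 1) _ h1
    rwa [show k - l.length - 1 + 1 = k - l.length from by omega] at this
  have hε0 : ε ((l.foldr (fun s f => (D s).comp f) LinearMap.id)
      (MonoidAlgebra.of ℤ (FreeGroup S) g - 1)) = 0 := by
    refine (hImem _).mp ?_
    have : k - l.length = (k - l.length - 1) + 1 := by omega
    exact hpow_le (k - l.length - 1) (by rwa [← this])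
  have hlne : l ≠ [] := by
    cases l with
    | nil => simp at hl
    | cons => simp
  have hsplit : MonoidAlgebra.of ℤ (FreeGroup S) g
      = (MonoidAlgebra.of ℤ (FreeGroup S) g - 1) + 1 := (sub_add_cancel _ _).symm
  rw [hsplit, map_add, map_add, hfold1 l hlne, map_zero, add_zero, hε0]
end

section
/- Let F be the free group on a set S with augmentation map ε : ℤF → ℤ, and for each s ∈ S let D_s : ℤF → ℤF be a ℤ-linear map satisfying D_s(xy) = D_s(x)·ε(y) + x·D_s(y) for all x, y ∈ ℤF, with D_s(s) = 1 and D_s(s') = 0 for s' ∈ S, s' ≠ s. Let n ≥ 1, let s_1, …, s_n ∈ S satisfy s_i ≠ s_{i+1} for 1 ≤ i < n, let m_1, …, m_n be nonzero integers, and set w = s_1^{m_1} s_2^{m_2} ⋯ s_n^{m_n}. Then ε(D_{s_1}(D_{s_2}(⋯(D_{s_n}(w))⋯))) = m_1 m_2 ⋯ m_n; in particular this value is nonzero. -/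
namespace FoxAux
variable {S : Type*}
local notation "of'" => MonoidAlgebra.of ℤ (FreeGroup S)

theorem eps_one (ε : MonoidAlgebra ℤ (FreeGroup S) →ₗ[ℤ] ℤ)
    (hε : ∀ g : FreeGroup S, ε (of' g) = 1) :
    ε (1 : MonoidAlgebra ℤ (FreeGroup S)) = 1 := by
  have := hε 1; rwa [map_one] at this

theorem D_one (ε : MonoidAlgebra ℤ (FreeGroup S) →ₗ[ℤ] ℤ)
    (hε : ∀ g : FreeGroup S, ε (of' g) = 1)
    (D : S → MonoidAlgebra ℤ (FreeGroup S) →ₗ[ℤ] MonoidAlgebra ℤ (FreeGroup S))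
    (hD : ∀ s x y, D s (x * y) = ε y • D s x + x * D s y) (t : S) : D t 1 = 0 := by
  have h := hD t 1 1
  rw [mul_one, eps_one ε hε, one_smul, one_mul] at h
  nth_rewrite 1 [← add_zero (D t 1)] at h
  exact (add_left_cancel h).symm

theorem eps_of_mul (ε : MonoidAlgebra ℤ (FreeGroup S) →ₗ[ℤ] ℤ)
    (hε : ∀ g : FreeGroup S, ε (of' g) = 1)
    (g : FreeGroup S) (x : MonoidAlgebra ℤ (FreeGroup S)) :
    ε (of' g * x) = ε x := by
  induction x using MonoidAlgebra.induction_on with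
  | of g' => rw [← map_mul, hε, hε]
  | add f f' h1 h2 => rw [mul_add, map_add, map_add, h1, h2]
  | smul r f h1 => rw [mul_smul_comm, map_smul, map_smul, h1]

theorem D_inv_ne (ε : MonoidAlgebra ℤ (FreeGroup S) →ₗ[ℤ] ℤ)
    (hε : ∀ g : FreeGroup S, ε (of' g) = 1)
    (D : S → MonoidAlgebra ℤ (FreeGroup S) →ₗ[ℤ] MonoidAlgebra ℤ (FreeGroup S))
    (hD : ∀ s x y, D s (x * y) = ε y • D s x + x * D s y)
    (hD0 : ∀ s s' : S, s' ≠ s → D s (of' (FreeGroup.of s')) = 0)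
    (u r : S) (h : u ≠ r) :
    D u (of' (FreeGroup.of r)⁻¹) = 0 := by
  have h0 : of' (FreeGroup.of r) * of' (FreeGroup.of r)⁻¹ = 1 := by
    rw [← map_mul, mul_inv_cancel, map_one]
  have h1 := hD u (of' (FreeGroup.of r)) (of' (FreeGroup.of r)⁻¹)
  rw [h0, D_one ε hε D hD, hε, hD0 u r h.symm, smul_zero, zero_add] at h1
  have h2 := congrArg (fun z => of' (FreeGroup.of r)⁻¹ * z) h1.symm
  simp only [← mul_assoc, ← map_mul, inv_mul_cancel, map_one, one_mul, mul_zero] at h2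
  exact h2

theorem D_inv_self (ε : MonoidAlgebra ℤ (FreeGroup S) →ₗ[ℤ] ℤ)
    (hε : ∀ g : FreeGroup S, ε (of' g) = 1)
    (D : S → MonoidAlgebra ℤ (FreeGroup S) →ₗ[ℤ] MonoidAlgebra ℤ (FreeGroup S))
    (hD : ∀ s x y, D s (x * y) = ε y • D s x + x * D s y)
    (hD1 : ∀ s : S, D s (of' (FreeGroup.of s)) = 1) (r : S) :
    D r (of' (FreeGroup.of r)⁻¹) = -(of' (FreeGroup.of r)⁻¹) := by
  have h0 : of' (FreeGroup.of r) * of' (FreeGroup.of r)⁻¹ = 1 := by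
    rw [← map_mul, mul_inv_cancel, map_one]
  have h1 := hD r (of' (FreeGroup.of r)) (of' (FreeGroup.of r)⁻¹)
  rw [h0, D_one ε hε D hD, hε, hD1, one_smul] at h1
  have h2 : of' (FreeGroup.of r) * D r (of' (FreeGroup.of r)⁻¹) = -1 :=
    eq_neg_of_add_eq_zero_right h1.symm
  have h3 := congrArg (fun z => of' (FreeGroup.of r)⁻¹ * z) h2
  simp only [← mul_assoc, ← map_mul, inv_mul_cancel, map_one, one_mul, mul_neg_one] at h3
  exact h3

theorem D_zpow_ne (ε : MonoidAlgebra ℤ (FreeGroup S) →ₗ[ℤ] ℤ)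
    (hε : ∀ g : FreeGroup S, ε (of' g) = 1)
    (D : S → MonoidAlgebra ℤ (FreeGroup S) →ₗ[ℤ] MonoidAlgebra ℤ (FreeGroup S))
    (hD : ∀ s x y, D s (x * y) = ε y • D s x + x * D s y)
    (hD0 : ∀ s s' : S, s' ≠ s → D s (of' (FreeGroup.of s')) = 0)
    (u r : S) (h : u ≠ r) (a : ℤ) :
    D u (of' (FreeGroup.of r ^ a)) = 0 := by
  induction a using Int.induction_on with
  | zero => rw [zpow_zero, map_one, D_one ε hε D hD]
  | succ k ih =>
      rw [zpow_add_one, map_mul, hD, ih, hD0 u r h.symm, smul_zero, mul_zero, add_zero]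
  | pred k ih =>
      rw [zpow_sub_one, map_mul, hD, ih, D_inv_ne ε hε D hD hD0 u r h,
        smul_zero, mul_zero, add_zero]

theorem eps_D_zpow (ε : MonoidAlgebra ℤ (FreeGroup S) →ₗ[ℤ] ℤ)
    (hε : ∀ g : FreeGroup S, ε (of' g) = 1)
    (D : S → MonoidAlgebra ℤ (FreeGroup S) →ₗ[ℤ] MonoidAlgebra ℤ (FreeGroup S))
    (hD : ∀ s x y, D s (x * y) = ε y • D s x + x * D s y)
    (hD1 : ∀ s : S, D s (of' (FreeGroup.of s)) = 1) (r : S) (a : ℤ) :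
    ε (D r (of' (FreeGroup.of r ^ a))) = a := by
  induction a using Int.induction_on with
  | zero => rw [zpow_zero, map_one, D_one ε hε D hD, map_zero]
  | succ k ih =>
      rw [zpow_add_one, map_mul, hD, hD1, hε, one_smul, mul_one, map_add, ih, hε]
  | pred k ih =>
      rw [zpow_sub_one, map_mul, hD, D_inv_self ε hε D hD hD1, mul_neg, ← map_mul,
        ← zpow_sub_one, hε, one_smul, map_add, map_neg, ih, hε]
      ring

theorem D_D_zpow (ε : MonoidAlgebra ℤ (FreeGroup S) →ₗ[ℤ] ℤ)
    (hε : ∀ g : FreeGroup S, ε (of' g) = 1)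
    (D : S → MonoidAlgebra ℤ (FreeGroup S) →ₗ[ℤ] MonoidAlgebra ℤ (FreeGroup S))
    (hD : ∀ s x y, D s (x * y) = ε y • D s x + x * D s y)
    (hD1 : ∀ s : S, D s (of' (FreeGroup.of s)) = 1)
    (hD0 : ∀ s s' : S, s' ≠ s → D s (of' (FreeGroup.of s')) = 0)
    (u r : S) (h : u ≠ r) (a : ℤ) :
    D u (D r (of' (FreeGroup.of r ^ a))) = 0 := by
  induction a using Int.induction_on with
  | zero => rw [zpow_zero, map_one, D_one ε hε D hD, map_zero]
  | succ k ih =>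
      rw [zpow_add_one, map_mul, hD, hD1, hε, one_smul, mul_one, map_add, ih,
        D_zpow_ne ε hε D hD hD0 u r h, zero_add]
  | pred k ih =>
      rw [zpow_sub_one, map_mul, hD, D_inv_self ε hε D hD hD1, mul_neg, ← map_mul,
        ← zpow_sub_one, hε, one_smul, map_add, map_neg, ih,
        D_zpow_ne ε hε D hD hD0 u r h, neg_zero, add_zero]

/-- the chain of derivatives -/
noncomputable def chainD (D : S → MonoidAlgebra ℤ (FreeGroup S) →ₗ[ℤ] MonoidAlgebra ℤ (FreeGroup S))
    (L : List S) : MonoidAlgebra ℤ (FreeGroup S) →ₗ[ℤ] MonoidAlgebra ℤ (FreeGroup S) :=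
  L.foldr (fun t f => (D t).comp f) LinearMap.id

theorem chainD_cons (D : S → MonoidAlgebra ℤ (FreeGroup S) →ₗ[ℤ] MonoidAlgebra ℤ (FreeGroup S))
    (t : S) (L : List S) (x : MonoidAlgebra ℤ (FreeGroup S)) :
    chainD D (t :: L) x = D t (chainD D L x) := rfl

theorem chainD_concat (D : S → MonoidAlgebra ℤ (FreeGroup S) →ₗ[ℤ] MonoidAlgebra ℤ (FreeGroup S))
    (L : List S) (u : S) (x : MonoidAlgebra ℤ (FreeGroup S)) :
    chainD D (L ++ [u]) x = chainD D L (D u x) := by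
  induction L with
  | nil => rfl
  | cons t L ih => rw [List.cons_append, chainD_cons, ih, chainD_cons]


theorem step [DecidableEq S] (ε : MonoidAlgebra ℤ (FreeGroup S) →ₗ[ℤ] ℤ)
    (hε : ∀ g : FreeGroup S, ε (of' g) = 1)
    (D : S → MonoidAlgebra ℤ (FreeGroup S) →ₗ[ℤ] MonoidAlgebra ℤ (FreeGroup S))
    (hD : ∀ s x y, D s (x * y) = ε y • D s x + x * D s y)
    (hD1 : ∀ s : S, D s (of' (FreeGroup.of s)) = 1)
    (hD0 : ∀ s s' : S, s' ≠ s → D s (of' (FreeGroup.of s')) = 0)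
    (L : List S) (u : S) (hC : (L ++ [u]).Chain' (· ≠ ·)) (v : FreeGroup S) (r : S) (a : ℤ) :
    ε (chainD D (L ++ [u]) (of' (v * FreeGroup.of r ^ a))) =
      ε (chainD D (L ++ [u]) (of' v)) +
        (if u = r then a * ε (chainD D L (of' v)) else 0) := by
  rw [map_mul, chainD_concat, chainD_concat, hD, hε, one_smul, map_add, map_add]
  congr 1
  by_cases hur : u = r
  · subst hur
    rw [if_pos rfl]
    cases L using List.reverseRecOn with
    | nil =>
      show ε (of' v * D u (of' (FreeGroup.of u ^ a))) = a * ε (of' v)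
      rw [eps_of_mul ε hε, eps_D_zpow ε hε D hD hD1, hε, mul_one]
    | append_singleton L₂ u' =>
      have hu' : u' ≠ u := by
        have h5 := (List.isChain_append.mp hC).2.2
        exact h5 u' (by simp) u (by simp)
      rw [chainD_concat, hD, eps_D_zpow ε hε D hD hD1,
        D_D_zpow ε hε D hD hD1 hD0 u' u hu', mul_zero, add_zero, map_smul, map_smul,
        chainD_concat, smul_eq_mul]
  · rw [if_neg hur, D_zpow_ne ε hε D hD hD0 u r hur, mul_zero, map_zero, map_zero]

theorem claimC [DecidableEq S] (ε : MonoidAlgebra ℤ (FreeGroup S) →ₗ[ℤ] ℤ)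
    (hε : ∀ g : FreeGroup S, ε (of' g) = 1)
    (D : S → MonoidAlgebra ℤ (FreeGroup S) →ₗ[ℤ] MonoidAlgebra ℤ (FreeGroup S))
    (hD : ∀ s x y, D s (x * y) = ε y • D s x + x * D s y)
    (hD1 : ∀ s : S, D s (of' (FreeGroup.of s)) = 1)
    (hD0 : ∀ s s' : S, s' ≠ s → D s (of' (FreeGroup.of s')) = 0)
    (P : List (S × ℤ)) (L : List S) (hL : L.Chain' (· ≠ ·)) (hlen : P.length ≤ L.length) :
    ε (chainD D L (of' ((P.map (fun p => FreeGroup.of p.1 ^ p.2)).prod))) =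
      if L = P.map Prod.fst then (P.map Prod.snd).prod else 0 := by
  induction P using List.reverseRecOn generalizing L hL with
  | nil =>
      cases L using List.reverseRecOn with
      | nil =>
          simp only [List.map_nil, List.prod_nil, map_one]
          rw [if_pos trivial]
          exact eps_one ε hε
      | append_singleton L₂ u =>
          rw [List.map_nil, List.prod_nil, map_one, chainD_concat, D_one ε hε D hD,
            map_zero, map_zero, if_neg (by simp)]
  | append_singleton P p ih =>
      obtain ⟨r, a⟩ := p
      cases L using List.reverseRecOn with
      | nil => simp at hlen
      | append_singleton L₂ u =>
        rw [List.map_append, List.prod_append, List.map_cons, List.map_nil,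
          List.prod_cons, List.prod_nil, mul_one]
        rw [step ε hε D hD hD1 hD0 L₂ u hL _ r a]
        have hlen2 : P.length ≤ L₂.length := by
          simpa using hlen
        have h1 := ih (L₂ ++ [u]) hL (by simpa using Nat.le_succ_of_le hlen2)
        rw [if_neg (by
          intro hcon
          have := congrArg List.length hcon
          simp at this
          omega)] at h1
        rw [h1, zero_add]
        have h2 := ih L₂ (List.isChain_append.mp hL).1 hlen2
        rw [h2]
        have key : (L₂ ++ [u] = (P ++ [(r, a)]).map Prod.fst) ↔
            (L₂ = P.map Prod.fst ∧ u = r) := by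
          rw [List.map_append]
          constructor
          · intro h
            obtain ⟨h5, h6⟩ := List.append_inj' h rfl
            exact ⟨h5, by simpa using h6⟩
          · rintro ⟨rfl, rfl⟩; rfl
        by_cases h3 : u = r
        · by_cases h4 : L₂ = P.map Prod.fst
          · rw [if_pos h3, if_pos h4, if_pos (key.mpr ⟨h4, h3⟩), List.map_append,
              List.prod_append]
            simp [mul_comm]
          · rw [if_pos h3, if_neg h4, if_neg (fun hc => h4 (key.mp hc).1), mul_zero]
        · rw [if_neg h3, if_neg (fun hc => h3 (key.mp hc).2)]

end FoxAux


/-- Let `F` be the free group on a set `S`, `ε : ℤF → ℤ` the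
augmentation map, and for each `s ∈ S` let `D_s : ℤF → ℤF` be a `ℤ`-linear map with
`D_s(xy) = D_s(x)·ε(y) + x·D_s(y)`, `D_s(s) = 1`, and `D_s(s') = 0` for `s' ≠ s`.
Let `n ≥ 1`, let `s_1, …, s_n ∈ S` (here `s 0, …, s (n-1)`) satisfy `s_i ≠ s_{i+1}`,
let `m_1, …, m_n` be nonzero integers, and set `w = s_1^{m_1} ⋯ s_n^{m_n}`.  Then
`ε(D_{s_1}(D_{s_2}(⋯(D_{s_n}(w))⋯))) = m_1 m_2 ⋯ m_n ≠ 0`. -/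
theorem augmentation_freeDerivative_chain_eq_prod {S : Type*}
    (ε : MonoidAlgebra ℤ (FreeGroup S) →ₗ[ℤ] ℤ)
    (hε : ∀ g : FreeGroup S, ε (MonoidAlgebra.of ℤ (FreeGroup S) g) = 1)
    (D : S → MonoidAlgebra ℤ (FreeGroup S) →ₗ[ℤ] MonoidAlgebra ℤ (FreeGroup S))
    (hD : ∀ s x y, D s (x * y) = ε y • D s x + x * D s y)
    (hD1 : ∀ s : S, D s (MonoidAlgebra.of ℤ (FreeGroup S) (FreeGroup.of s)) = 1)
    (hD0 : ∀ s s' : S, s' ≠ s → D s (MonoidAlgebra.of ℤ (FreeGroup S) (FreeGroup.of s')) = 0)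
    (n : ℕ) (hn : 1 ≤ n) (s : Fin n → S)
    (hs : ∀ (i : Fin n) (h : i.val + 1 < n), s i ≠ s ⟨i.val + 1, h⟩)
    (m : Fin n → ℤ) (hm : ∀ i, m i ≠ 0)
    (w : FreeGroup S)
    (hw : w = (List.ofFn (fun i : Fin n => FreeGroup.of (s i) ^ m i)).prod) :
    ε (((List.finRange n).foldr (fun i f => (D (s i)).comp f) LinearMap.id)
        (MonoidAlgebra.of ℤ (FreeGroup S) w)) = ∏ i, m i := by
  classical
  subst hw
  have hfold : ((List.finRange n).foldr (fun i f => (D (s i)).comp f) LinearMap.id)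
      = FoxAux.chainD D ((List.finRange n).map s) := by
    rw [FoxAux.chainD, List.foldr_map]
  rw [hfold]
  set P : List (S × ℤ) := (List.finRange n).map (fun i => (s i, m i)) with hP
  have hLP : (List.finRange n).map s = P.map Prod.fst := by
    rw [hP, List.map_map]; rfl
  have hword : (List.ofFn fun i : Fin n => FreeGroup.of (s i) ^ m i)
      = P.map (fun p => FreeGroup.of p.1 ^ p.2) := by
    rw [List.ofFn_eq_map, hP, List.map_map]; rfl
  have hchain : ((List.finRange n).map s).Chain' (· ≠ ·) := by
    show List.IsChain _ _
    rw [List.isChain_map, List.isChain_iff_getElem]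
    intro i hi
    simp only [List.getElem_finRange, List.length_finRange] at *
    exact hs _ _
  have hlen : P.length ≤ ((List.finRange n).map s).length := by simp [hP]
  rw [hword, FoxAux.claimC ε hε D hD hD1 hD0 P _ hchain hlen, if_pos hLP]
  rw [hP, List.map_map]
  have h2 : (Prod.snd ∘ fun i : Fin n => (s i, m i)) = m := rfl
  rw [h2, ← List.ofFn_eq_map, List.prod_ofFn]
end

section
/- Let F be the free group on a set S with augmentation map ε : ℤF → ℤ, and for each s ∈ S let D_s : ℤF → ℤF be a ℤ-linear map satisfying D_s(xy) = D_s(x)·ε(y) + x·D_s(y) for all x, y ∈ ℤF, with D_s(s) = 1 and D_s(s') = 0 for s' ∈ S, s' ≠ s. Let n ≥ 1, let s_1, …, s_n ∈ S satisfy s_i ≠ s_{i+1} for 1 ≤ i < n, let m_1, …, m_n be nonzero integers, set u_i = s_i^{m_i}, and let w = u_1 u_2 ⋯ u_n. Then for every j with 1 ≤ j ≤ n, D_{s_j}(D_{s_{j+1}}(⋯(D_{s_n}(w))⋯)) equals the sum over all tuples 1 ≤ i_j < i_{j+1} < ⋯ < i_n ≤ n of (u_1 ⋯ u_{i_j − 1})·D_{s_j}(u_{i_j})·ε(D_{s_{j+1}}(u_{i_{j+1}}))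 ⋯ ε(D_{s_n}(u_{i_n})). -/
open scoped Classical

section Aux
variable {S : Type*}
    (ε : MonoidAlgebra ℤ (FreeGroup S) →ₗ[ℤ] ℤ)
    (hε : ∀ g : FreeGroup S, ε (MonoidAlgebra.of ℤ (FreeGroup S) g) = 1)
    (D : S → MonoidAlgebra ℤ (FreeGroup S) →ₗ[ℤ] MonoidAlgebra ℤ (FreeGroup S))
    (hD : ∀ s x y, D s (x * y) = ε y • D s x + x * D s y)
    (hD1 : ∀ s : S, D s (MonoidAlgebra.of ℤ (FreeGroup S) (FreeGroup.of s)) = 1)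
    (hD0 : ∀ s s' : S, s' ≠ s → D s (MonoidAlgebra.of ℤ (FreeGroup S) (FreeGroup.of s')) = 0)

local notation "of" => MonoidAlgebra.of ℤ (FreeGroup S)

include hε hD in
lemma FD_D_one (a : S) : D a 1 = 0 := by
  have h1 : ((1 : MonoidAlgebra ℤ (FreeGroup S))) = of 1 := (map_one (of)).symm
  have h := hD a 1 1
  rw [mul_one, one_mul] at h
  rw [h1, hε, one_smul] at h
  exact (left_eq_add.mp h)

include hε hD hD0 in
lemma FD_D_pow_ne (a t : S) (hta : t ≠ a) : ∀ k : ℤ, D a (of (FreeGroup.of t ^ k)) = 0 := by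
  have hone : D a 1 = 0 := FD_D_one ε hε D hD a
  have hinv : D a (of (FreeGroup.of t)⁻¹) = 0 := by
    have h := hD a (of (FreeGroup.of t)) (of (FreeGroup.of t)⁻¹)
    rw [← map_mul, mul_inv_cancel, map_one, hone, hD0 a t hta, smul_zero, zero_add] at h
    have h2 := congrArg (fun x => of (FreeGroup.of t)⁻¹ * x) h.symm
    simpa [← mul_assoc, ← map_mul, ← MonoidAlgebra.one_def] using h2
  intro k
  induction k using Int.induction_on with
  | zero => simpa [← MonoidAlgebra.one_def] using hone
  | succ p ih =>
      have : FreeGroup.of t ^ ((p : ℤ) + 1) = FreeGroup.of t ^ (p : ℤ) * FreeGroup.of t :=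
        zpow_add_one _ _
      rw [this, map_mul, hD, ih, hD0 a t hta, smul_zero, mul_zero, add_zero]
  | pred p ih =>
      have : FreeGroup.of t ^ (-(p : ℤ) - 1) = FreeGroup.of t ^ (-(p : ℤ)) * (FreeGroup.of t)⁻¹ := by
        rw [zpow_sub_one]
      rw [this, map_mul, hD, ih, hinv, smul_zero, mul_zero, add_zero]

include hε hD hD1 hD0 in
lemma FD_DD_pow (a b : S) (hba : b ≠ a) (t : S) :
    ∀ k : ℤ, D a (D b (of (FreeGroup.of t ^ k))) = 0 := by
  intro k
  by_cases htb : t = b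
  · subst htb
    induction k using Int.induction_on with
    | zero => rw [zpow_zero, map_one, FD_D_one ε hε D hD t, map_zero]
    | succ p ih =>
        have h1 : FreeGroup.of t ^ ((p : ℤ) + 1) = FreeGroup.of t ^ (p : ℤ) * FreeGroup.of t :=
          zpow_add_one _ _
        rw [h1, map_mul, hD, hD1, mul_one, hε, one_smul, map_add, ih,
          FD_D_pow_ne ε hε D hD hD0 a t hba (p : ℤ), add_zero]
    | pred p ih =>
        have hstep : D t (of (FreeGroup.of t ^ (-(p : ℤ)))) =
            ε (of (FreeGroup.of t)) • D t (of (FreeGroup.of t ^ (-(p : ℤ) - 1)))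
              + of (FreeGroup.of t ^ (-(p : ℤ) - 1)) * D t (of (FreeGroup.of t)) := by
          rw [← hD, ← map_mul, ← zpow_add_one]
          norm_num
        rw [hD1, mul_one, hε, one_smul] at hstep
        have h2 : D t (of (FreeGroup.of t ^ (-(p : ℤ) - 1))) =
            D t (of (FreeGroup.of t ^ (-(p : ℤ)))) - of (FreeGroup.of t ^ (-(p : ℤ) - 1)) := by
          rw [hstep]; abel
        rw [h2, map_sub, ih, FD_D_pow_ne ε hε D hD hD0 a t hba, sub_zero]
  · rw [FD_D_pow_ne ε hε D hD hD0 b t htb, map_zero]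

include hε hD in
lemma FD_leibniz (a : S) : ∀ (L : List (FreeGroup S)), D a (of L.prod) =
    ∑ i : Fin L.length, of ((L.take i.val).prod) * D a (of (L.get i)) := by
  intro L
  induction L with
  | nil =>
      simp only [List.prod_nil, map_one, List.length_nil]
      rw [FD_D_one ε hε D hD a]
      simp
  | cons g L ih =>
      rw [List.prod_cons, map_mul, hD, hε, one_smul, ih]
      simp only [List.length_cons]
      rw [Fin.sum_univ_succ]
      simp only [List.get, List.take, List.prod_nil, List.prod_cons, map_one, one_mul,
        map_mul, Finset.mul_sum, mul_assoc, Fin.val_zero, Fin.val_succ, List.get_cons_zero,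
        List.get_cons_succ, List.take_zero, List.take_succ_cons]
      rfl

include hε hD in
lemma FD_D_take (a : S) (n : ℕ) (u : Fin n → FreeGroup S) (v : ℕ) (hv : v ≤ n) :
    D a (of (((List.ofFn u).take v).prod)) =
    ∑ i ∈ Finset.univ.filter (fun i : Fin n => i.val < v),
      of (((List.ofFn u).take i.val).prod) * D a (of (u i)) := by
  rw [FD_leibniz ε hε D hD a]
  have hlen : ((List.ofFn u).take v).length = v := by
    simp [List.length_take, hv]
  refine Finset.sum_bij' (fun (i : Fin ((List.ofFn u).take v).length) _ =>
      (⟨i.val, by have := i.isLt; omega⟩ : Fin n))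
    (fun (i : Fin n) hi => (⟨i.val, by
      simp only [Finset.mem_filter] at hi; omega⟩ : Fin ((List.ofFn u).take v).length))
    ?_ ?_ ?_ ?_ ?_
  · intro i _
    simp only [Finset.mem_filter, Finset.mem_univ, true_and]
    have := i.isLt; omega
  · intro i hi; exact Finset.mem_univ _
  · intro i _; rfl
  · intro i hi; rfl
  · intro i _
    have hiv : i.val < v := by have := i.isLt; omega
    have h1 : List.take i.val ((List.ofFn u).take v) = (List.ofFn u).take i.val := by
      rw [List.take_take]
      congr 1
      omega
    rw [h1]
    congr 1
    have h2 : ((List.ofFn u).take v).get i = u ⟨i.val, by omega⟩ := by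
      rw [List.get_eq_getElem, List.getElem_take, List.getElem_ofFn]
    rw [h2]

end Aux

lemma FD_prod_filter_pos {M : Type*} [CommMonoid M] {k : ℕ} (f : Fin (k+1) → M) :
    ∏ t ∈ Finset.univ.filter (fun t : Fin (k+1) => 0 < t.val), f t = ∏ t : Fin k, f t.succ := by
  refine (Finset.prod_bij' (fun (t : Fin (k+1)) ht => (t.pred (fun heq => by
      simp only [Finset.mem_filter] at ht
      rw [heq] at ht
      simp at ht) : Fin k))
    (fun (t : Fin k) _ => t.succ) ?_ ?_ ?_ ?_ ?_)
  · intro t _; exact Finset.mem_univ _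
  · intro t _
    simp only [Finset.mem_filter, Finset.mem_univ, true_and, Fin.val_succ]
    omega
  · intro t ht; simp
  · intro t _; simp
  · intro t ht; congr 1; simp

lemma FD_strictMono_cons_iff {n d : ℕ} (i : Fin n) (ι : Fin (d+1) → Fin n) :
    StrictMono (Fin.cons i ι : Fin (d+2) → Fin n) ↔ StrictMono ι ∧ i < ι 0 := by
  constructor
  · intro h
    refine ⟨fun a b hab => ?_, ?_⟩
    · have := h (show Fin.succ a < Fin.succ b from Fin.succ_lt_succ_iff.mpr hab)
      simpa using this
    · have := h (Fin.succ_pos (0 : Fin (d+1)))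
      simpa using this
  · rintro ⟨hι, hi⟩ a b hab
    induction a using Fin.cases with
    | zero =>
        induction b using Fin.cases with
        | zero => exact absurd hab (lt_irrefl _)
        | succ b' =>
            simp only [Fin.cons_zero, Fin.cons_succ]
            exact lt_of_lt_of_le hi (hι.monotone (Fin.zero_le b'))
    | succ a' =>
        induction b using Fin.cases with
        | zero => exact absurd hab (Fin.not_lt.mpr (Fin.zero_le _))
        | succ b' =>
            simp only [Fin.cons_succ]
            exact hι (Fin.succ_lt_succ_iff.mp hab)

section Main
variable {S : Type*}
    (ε : MonoidAlgebra ℤ (FreeGroup S) →ₗ[ℤ] ℤ)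
    (hε : ∀ g : FreeGroup S, ε (MonoidAlgebra.of ℤ (FreeGroup S) g) = 1)
    (D : S → MonoidAlgebra ℤ (FreeGroup S) →ₗ[ℤ] MonoidAlgebra ℤ (FreeGroup S))
    (hD : ∀ s x y, D s (x * y) = ε y • D s x + x * D s y)
    (hD1 : ∀ s : S, D s (MonoidAlgebra.of ℤ (FreeGroup S) (FreeGroup.of s)) = 1)
    (hD0 : ∀ s s' : S, s' ≠ s → D s (MonoidAlgebra.of ℤ (FreeGroup S) (FreeGroup.of s')) = 0)

local notation "of" => MonoidAlgebra.of ℤ (FreeGroup S)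

include hε hD hD1 hD0 in
lemma FD_aux (n : ℕ) (s : Fin n → S)
    (hs : ∀ (i : Fin n) (h : i.val + 1 < n), s i ≠ s ⟨i.val + 1, h⟩)
    (m : Fin n → ℤ)
    (u : Fin n → FreeGroup S) (hu : ∀ i, u i = FreeGroup.of (s i) ^ m i) :
    ∀ (d : ℕ), ∀ (j : ℕ) (hjd : j + (d+1) = n),
    (((List.finRange n).drop j).foldr (fun i f => (D (s i)).comp f) LinearMap.id)
        (of ((List.ofFn u).prod))
      = ∑ ι ∈ Finset.univ.filter (fun ι : Fin (d+1) → Fin n => StrictMono ι),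
          (∏ t ∈ Finset.univ.filter (fun t : Fin (d+1) => 0 < t.val),
              ε (D (s ⟨j + t.val, by omega⟩) (of (u (ι t)))))
            • (of (((List.ofFn u).take (ι 0).val).prod)
                * D (s ⟨j, by omega⟩) (of (u (ι 0)))) := by
  have hmk : ∀ (p q : ℕ) (hp : p < n) (hq : q < n), p = q → s ⟨p, hp⟩ = s ⟨q, hq⟩ := by
    intro p q hp hq h; subst h; rfl
  have hdrop : ∀ (j : ℕ) (hj : j < n),
      (List.finRange n).drop j = (⟨j, hj⟩ : Fin n) :: (List.finRange n).drop (j+1) := by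
    intro j hj
    rw [List.drop_eq_getElem_cons (by simpa using hj)]
    congr 1
    simp [List.getElem_finRange]
  intro d
  induction d with
  | zero =>
      intro j hjd
      have hj : j < n := by omega
      rw [hdrop j hj]
      have hnil : (List.finRange n).drop (j+1) = [] := by
        rw [show j + 1 = n by omega]; simp
      rw [hnil]
      simp only [List.foldr_cons, List.foldr_nil, LinearMap.comp_apply, LinearMap.id_apply]
      have hwhole : (List.ofFn u).prod = ((List.ofFn u).take n).prod := by
        rw [List.take_of_length_le (by simp)]
      rw [hwhole, FD_D_take ε hε D hD _ n u n le_rfl]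
      rw [Finset.filter_true_of_mem (fun (i : Fin n) _ => i.isLt)]
      rw [Finset.filter_true_of_mem (fun (ι : Fin 1 → Fin n) _ => Subsingleton.strictMono ι)]
      have hempty : (Finset.univ.filter (fun t : Fin 1 => 0 < t.val)) = ∅ := by
        apply Finset.filter_false_of_mem
        intro t _
        rw [Fin.val_eq_zero]
        exact lt_irrefl 0
      simp only [hempty, Finset.prod_empty, one_smul]
      exact (Fintype.sum_equiv (Equiv.funUnique (Fin 1) (Fin n)) _ _ (fun ι => rfl)).symm
  | succ d ih =>
      intro j hjd
      have hj : j < n := by omega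
      rw [hdrop j hj, List.foldr_cons, LinearMap.comp_apply, ih (j+1) (by omega), map_sum]
      have hterm : ∀ ι' ∈ Finset.univ.filter (fun ι' : Fin (d+1) → Fin n => StrictMono ι'),
          D (s ⟨j, hj⟩) ((∏ t ∈ Finset.univ.filter (fun t : Fin (d+1) => 0 < t.val),
              ε (D (s ⟨j + 1 + t.val, by omega⟩) (of (u (ι' t))))) •
            (of (((List.ofFn u).take (ι' 0).val).prod)
              * D (s ⟨j + 1, by omega⟩) (of (u (ι' 0)))))
          = ∑ i ∈ Finset.univ.filter (fun i : Fin n => i.val < (ι' 0).val),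
              ((∏ t ∈ Finset.univ.filter (fun t : Fin (d+1) => 0 < t.val),
                  ε (D (s ⟨j + 1 + t.val, by omega⟩) (of (u (ι' t)))))
                * ε (D (s ⟨j + 1, by omega⟩) (of (u (ι' 0))))) •
                (of (((List.ofFn u).take i.val).prod) * D (s ⟨j, hj⟩) (of (u i))) := by
        intro ι' _
        rw [map_smul, hD]
        have hzero : D (s ⟨j, hj⟩) (D (s ⟨j + 1, by omega⟩) (of (u (ι' 0)))) = 0 := by
          rw [hu (ι' 0)]
          exact FD_DD_pow ε hε D hD hD1 hD0 _ _ (Ne.symm (hs ⟨j, hj⟩ (show j + 1 < n by omega))) _ _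
        rw [hzero, mul_zero, add_zero,
          FD_D_take ε hε D hD _ n u (ι' 0).val (le_of_lt (ι' 0).isLt),
          smul_smul, Finset.smul_sum]
      rw [Finset.sum_congr rfl hterm, Finset.sum_sigma']
      refine Finset.sum_bij' (fun (x : Σ _ : Fin (d+1) → Fin n, Fin n) _ => Fin.cons x.2 x.1)
        (fun (ι : Fin (d+2) → Fin n) _ => ⟨Fin.tail ι, ι 0⟩) ?_ ?_ ?_ ?_ ?_
      · intro x hx
        simp only [Finset.mem_sigma, Finset.mem_filter, Finset.mem_univ, true_and] at hx
        simp only [Finset.mem_filter, Finset.mem_univ, true_and]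
        exact (FD_strictMono_cons_iff x.2 x.1).mpr ⟨hx.1, Fin.lt_def.mpr hx.2⟩
      · intro ι hι
        simp only [Finset.mem_filter, Finset.mem_univ, true_and] at hι
        simp only [Finset.mem_sigma, Finset.mem_filter, Finset.mem_univ, true_and]
        constructor
        · intro a b hab
          exact hι (Fin.succ_lt_succ_iff.mpr hab)
        · show (ι 0).val < (ι (Fin.succ 0)).val
          exact Fin.lt_def.mp (hι (Fin.succ_pos 0))
      · intro x hx
        rfl
      · intro ι hι
        exact Fin.cons_self_tail ι
      · intro x hx
        simp only [Fin.cons_zero]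
        congr 1
        simp only [FD_prod_filter_pos, Fin.cons_succ, Fin.val_succ, Fin.val_zero]
        rw [Fin.prod_univ_succ, mul_comm]
        congr 1
        apply Finset.prod_congr rfl
        intro t _
        congr 3
        exact hmk _ _ _ _ (by have h := Fin.val_succ t; omega)

end Main


/-- With `F`, `ε`, and the free derivatives `D_s` as usual, let `n ≥ 1`,
let `s_1, …, s_n ∈ S` (here `s 0, …, s (n-1)`) satisfy `s_i ≠ s_{i+1}`, let
`m_1, …, m_n` be nonzero integers, set `u_i = s_i^{m_i}` and `w = u_1 u_2 ⋯ u_n`.  Then for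
every `j` with `1 ≤ j ≤ n` (here `0 ≤ j < n`),
`D_{s_j}(D_{s_{j+1}}(⋯(D_{s_n}(w))⋯))` equals the sum over all strictly increasing tuples
`1 ≤ i_j < i_{j+1} < ⋯ < i_n ≤ n` (here strictly monotone `ι : Fin (n-j) → Fin n`) of
`(u_1 ⋯ u_{i_j − 1}) · D_{s_j}(u_{i_j}) · ε(D_{s_{j+1}}(u_{i_{j+1}})) ⋯ ε(D_{s_n}(u_{i_n}))`. -/
theorem freeDerivative_chain_eq_sum {S : Type*}
    (ε : MonoidAlgebra ℤ (FreeGroup S) →ₗ[ℤ] ℤ)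
    (hε : ∀ g : FreeGroup S, ε (MonoidAlgebra.of ℤ (FreeGroup S) g) = 1)
    (D : S → MonoidAlgebra ℤ (FreeGroup S) →ₗ[ℤ] MonoidAlgebra ℤ (FreeGroup S))
    (hD : ∀ s x y, D s (x * y) = ε y • D s x + x * D s y)
    (hD1 : ∀ s : S, D s (MonoidAlgebra.of ℤ (FreeGroup S) (FreeGroup.of s)) = 1)
    (hD0 : ∀ s s' : S, s' ≠ s → D s (MonoidAlgebra.of ℤ (FreeGroup S) (FreeGroup.of s')) = 0)
    (n : ℕ) (hn : 1 ≤ n) (s : Fin n → S)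
    (hs : ∀ (i : Fin n) (h : i.val + 1 < n), s i ≠ s ⟨i.val + 1, h⟩)
    (m : Fin n → ℤ) (hm : ∀ i, m i ≠ 0)
    (u : Fin n → FreeGroup S) (hu : ∀ i, u i = FreeGroup.of (s i) ^ m i)
    (w : FreeGroup S) (hw : w = (List.ofFn u).prod)
    (j : ℕ) (hj : j < n) :
    (((List.finRange n).drop j).foldr (fun i f => (D (s i)).comp f) LinearMap.id)
        (MonoidAlgebra.of ℤ (FreeGroup S) w)
      = ∑ ι ∈ Finset.univ.filter (fun ι : Fin (n - j) → Fin n => StrictMono ι),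
          (∏ t ∈ Finset.univ.filter (fun t : Fin (n - j) => 0 < t.val),
              ε (D (s ⟨j + t.val, by omega⟩)
                  (MonoidAlgebra.of ℤ (FreeGroup S) (u (ι t)))))
            • (MonoidAlgebra.of ℤ (FreeGroup S)
                  (((List.ofFn u).take (ι ⟨0, by omega⟩).val).prod)
                * D (s ⟨j, hj⟩)
                    (MonoidAlgebra.of ℤ (FreeGroup S) (u (ι ⟨0, by omega⟩)))) := by
  obtain ⟨d, hd⟩ : ∃ d, n - j = d + 1 := ⟨n - j - 1, by omega⟩
  rw [hw, FD_aux ε hε D hD hD1 hD0 n s hs m u hu d j (by omega)]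
  refine Finset.sum_bij' (fun (ι : Fin (d+1) → Fin n) _ => fun t : Fin (n - j) => ι ⟨t.val, by omega⟩)
    (fun (ι : Fin (n - j) → Fin n) _ => fun t : Fin (d+1) => ι ⟨t.val, by omega⟩) ?_ ?_ ?_ ?_ ?_
  · intro ι hι
    simp only [Finset.mem_filter, Finset.mem_univ, true_and] at hι ⊢
    intro a b hab
    exact hι (show (⟨a.val, by omega⟩ : Fin (d+1)) < ⟨b.val, by omega⟩ from hab)
  · intro ι hι
    simp only [Finset.mem_filter, Finset.mem_univ, true_and] at hι ⊢
    intro a b hab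
    exact hι (show (⟨a.val, by omega⟩ : Fin (n - j)) < ⟨b.val, by omega⟩ from hab)
  · intro ι hι; rfl
  · intro ι hι; rfl
  · intro ι hι
    have h0 : (0 : Fin (d+1)) = (⟨0, by omega⟩ : Fin (d+1)) := Fin.ext (by simp)
    rw [h0]
    congr 1
    refine Finset.prod_bij' (fun (t : Fin (d+1)) _ => (⟨t.val, by omega⟩ : Fin (n - j)))
      (fun (t : Fin (n - j)) _ => (⟨t.val, by omega⟩ : Fin (d+1))) ?_ ?_ ?_ ?_ ?_
    · intro t ht
      simpa using (by simpa using ht : 0 < t.val)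
    · intro t ht
      simp only [Finset.mem_filter, Finset.mem_univ, true_and]
      exact (by simpa using ht : 0 < t.val)
    · intro t _; rfl
    · intro t _; rfl
    · intro t _; rfl
end

section
/- Let g ≥ 2 and 1 ≤ g' < g, and let π_g = ⟨a_1, b_1, …, a_g, b_g | [a_1,b_1]⋯[a_g,b_g]⟩ be the fundamental group of the closed orientable surface of genus g. Set x = [a_1,b_1][a_2,b_2]⋯[a_{g'},b_{g'}] ∈ π_g. Then there exists a surjective group homomorphism ψ from π_g onto the dihedral group of order 8 such that ψ(x) ≠ 1. -/
open scoped commutatorElement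

/-- The single relator `[a_1,b_1][a_2,b_2]⋯[a_g,b_g]` of the genus `g` surface group,
where the generator `(i, false)` plays the role of `a_{i+1}` and `(i, true)` that of
`b_{i+1}`. -/
def surfaceRels (g : ℕ) : Set (FreeGroup (Fin g × Bool)) :=
  {(List.ofFn (fun i : Fin g =>
      ⁅FreeGroup.of (i, false), FreeGroup.of (i, true)⁆)).prod}

/-- The fundamental group of the closed orientable surface of genus `g`, presented as
`⟨a_1, b_1, …, a_g, b_g | [a_1,b_1][a_2,b_2]⋯[a_g,b_g]⟩`. -/
abbrev SurfaceGroup (g : ℕ) : Type :=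
  PresentedGroup (surfaceRels g)

/-- The generator `a_{i+1}` (if `c = false`) or `b_{i+1}` (if `c = true`) of the genus `g`
surface group. -/
def surfaceGen {g : ℕ} (i : Fin g) (c : Bool) : SurfaceGroup g :=
  PresentedGroup.of (i, c)

namespace SurfaceD4

open DihedralGroup

/-- `r` as a homomorphism from `Multiplicative (ZMod 4)`. -/
def rhom : Multiplicative (ZMod 4) →* DihedralGroup 4 where
  toFun k := r k.toAdd
  map_one' := one_def.symm
  map_mul' a b := (r_mul_r _ _).symm

lemma rhom_apply (k : ZMod 4) : rhom (Multiplicative.ofAdd k) = r k := rfl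

/-- The assignment of generators. -/
def fmap (g g' : ℕ) : Fin g × Bool → DihedralGroup 4 := fun p =>
  if p.1.val = 0 ∨ p.1.val = g' then (if p.2 then r 1 else sr 0) else 1

lemma comm_eval (g g' : ℕ) (i : Fin g) :
    ⁅fmap g g' (i, false), fmap g g' (i, true)⁆
      = rhom (Multiplicative.ofAdd (if i.val = 0 ∨ i.val = g' then (2 : ZMod 4) else 0)) := by
  by_cases h : i.val = 0 ∨ i.val = g' <;>
    simp only [fmap, h, if_true, if_false, Bool.cond_eq_ite, rhom_apply] <;>
    simp [commutatorElement_def, sr_mul_r, sr_mul_sr, r_mul_r] <;> decide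

lemma prod_rhom {n : ℕ} (e : Fin n → ZMod 4) :
    (List.ofFn fun i => rhom (Multiplicative.ofAdd (e i))).prod
      = rhom (Multiplicative.ofAdd (∑ i, e i)) := by
  have h1 : (List.ofFn fun i => rhom (Multiplicative.ofAdd (e i)))
      = (List.ofFn fun i => Multiplicative.ofAdd (e i)).map rhom := by
    rw [List.map_ofFn]; rfl
  rw [h1, ← MonoidHom.map_list_prod rhom]
  congr 1
  rw [List.prod_ofFn]
  exact (ofAdd_sum Finset.univ e).symm

end SurfaceD4

namespace SurfaceD4

lemma sum_ite_val {g : ℕ} (c : ℕ) (hc : c < g) :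
    ∑ i : Fin g, (if i.val = c then (2 : ZMod 4) else 0) = 2 := by
  have h : ∀ i : Fin g, (if i.val = c then (2 : ZMod 4) else 0)
      = if i = ⟨c, hc⟩ then 2 else 0 := fun i => by simp [Fin.ext_iff]
  rw [Finset.sum_congr rfl fun i _ => h i, Finset.sum_ite_eq' Finset.univ]
  simp

end SurfaceD4

theorem exists_dihedral_quotient_surfaceGroup (g g' : ℕ) (hg : 2 ≤ g)
    (hg'1 : 1 ≤ g') (hg' : g' < g) :
    ∃ ψ : SurfaceGroup g →* DihedralGroup 4,
      Function.Surjective ψ ∧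
      ψ ((List.ofFn (fun i : Fin g' =>
          ⁅surfaceGen (Fin.castLE hg'.le i) false,
            surfaceGen (Fin.castLE hg'.le i) true⁆)).prod) ≠ 1 := by
  classical
  open DihedralGroup SurfaceD4 in
  have hg'ne : g' ≠ 0 := by omega
  set f := fmap g g' with hf
  have hrel : ∀ rel ∈ surfaceRels g, FreeGroup.lift f rel = 1 := by
    intro rel hrel
    rw [surfaceRels, Set.mem_singleton_iff] at hrel
    subst hrel
    rw [map_list_prod, List.map_ofFn]
    have hfun : ((FreeGroup.lift f) ∘ fun i : Fin g =>
        ⁅FreeGroup.of (i, false), FreeGroup.of (i, true)⁆)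
        = fun i : Fin g => rhom (Multiplicative.ofAdd
            (if i.val = 0 ∨ i.val = g' then (2 : ZMod 4) else 0)) := by
      funext i
      simp only [Function.comp_apply, map_commutatorElement, FreeGroup.lift_apply_of]
      exact comm_eval g g' i
    rw [hfun, prod_rhom]
    have hsum : ∑ i : Fin g, (if i.val = 0 ∨ i.val = g' then (2 : ZMod 4) else 0)
        = ∑ i : Fin g, ((if i.val = 0 then (2 : ZMod 4) else 0)
            + (if i.val = g' then (2 : ZMod 4) else 0)) := by
      refine Finset.sum_congr rfl fun i _ => ?_
      by_cases h0 : i.val = 0 <;> by_cases h1 : i.val = g' <;>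
        simp [h0, h1] <;> omega
    rw [hsum, Finset.sum_add_distrib, sum_ite_val 0 (by omega),
      sum_ite_val g' hg', rhom_apply]
    rw [show (2 : ZMod 4) + 2 = 0 by decide, one_def]
  refine ⟨PresentedGroup.toGroup hrel, ?_, ?_⟩
  · set ψ := PresentedGroup.toGroup hrel
    have ha : ψ (surfaceGen (⟨0, by omega⟩ : Fin g) false) = sr 0 := by
      rw [surfaceGen, PresentedGroup.toGroup.of]
      simp [hf, fmap]
    have hb : ψ (surfaceGen (⟨0, by omega⟩ : Fin g) true) = r 1 := by
      rw [surfaceGen, PresentedGroup.toGroup.of]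
      simp [hf, fmap]
    rintro (k | k)
    · refine ⟨(surfaceGen (⟨0, by omega⟩ : Fin g) true) ^ k.val, ?_⟩
      rw [map_pow, hb, r_one_pow]
      congr 1
      simp [ZMod.natCast_val, ZMod.cast_id]
    · refine ⟨(surfaceGen (⟨0, by omega⟩ : Fin g) false) *
        (surfaceGen (⟨0, by omega⟩ : Fin g) true) ^ k.val, ?_⟩
      rw [map_mul, map_pow, ha, hb, r_one_pow, sr_mul_r, zero_add]
      congr 1
      simp [ZMod.natCast_val, ZMod.cast_id]
  · set ψ := PresentedGroup.toGroup hrel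
    rw [map_list_prod, List.map_ofFn]
    have hfun : ((⇑ψ) ∘ fun i : Fin g' =>
        ⁅surfaceGen (Fin.castLE hg'.le i) false, surfaceGen (Fin.castLE hg'.le i) true⁆)
        = fun i : Fin g' => rhom (Multiplicative.ofAdd
            (if i.val = 0 then (2 : ZMod 4) else 0)) := by
      funext i
      simp only [Function.comp_apply, map_commutatorElement, surfaceGen, ψ,
        PresentedGroup.toGroup.of]
      rw [show f (Fin.castLE hg'.le i, false) = fmap g g' ((Fin.castLE hg'.le i), false) from rfl,
        show f (Fin.castLE hg'.le i, true) = fmap g g' ((Fin.castLE hg'.le i), true) from rfl]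
      rw [comm_eval]
      congr 1
      have hi : i.val < g' := i.isLt
      by_cases h0 : i.val = 0 <;> simp [Fin.castLE, h0] <;> omega
    rw [hfun, prod_rhom, sum_ite_val 0 (by omega), rhom_apply]
    simp only [one_def, ne_eq, DihedralGroup.r.injEq]
    decide
end

section
/- Let g ≥ 2 and 1 ≤ g' < g, and let π_g = ⟨a_1, b_1, …, a_g, b_g | [a_1,b_1]⋯[a_g,b_g]⟩ be the fundamental group of the closed orientable surface of genus g. Then the element x = [a_1,b_1][a_2,b_2]⋯[a_{g'},b_{g'}] does not lie in the third term γ_3(π_g) of the lower central series of π_g; in particular x ≠ 1. -/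
open scoped commutatorElement

/-- The integral Heisenberg group. -/
@[ext] structure Heis where
  a : ℤ
  b : ℤ
  c : ℤ

namespace Heis

instance : Mul Heis := ⟨fun x y => ⟨x.a + y.a, x.b + y.b, x.c + y.c + x.a * y.b⟩⟩
instance : One Heis := ⟨⟨0, 0, 0⟩⟩
instance : Inv Heis := ⟨fun x => ⟨-x.a, -x.b, -x.c + x.a * x.b⟩⟩

@[simp] lemma mul_a (x y : Heis) : (x * y).a = x.a + y.a := rfl
@[simp] lemma mul_b (x y : Heis) : (x * y).b = x.b + y.b := rfl
@[simp] lemma mul_c (x y : Heis) : (x * y).c = x.c + y.c + x.a * y.b := rfl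
@[simp] lemma one_a : (1 : Heis).a = 0 := rfl
@[simp] lemma one_b : (1 : Heis).b = 0 := rfl
@[simp] lemma one_c : (1 : Heis).c = 0 := rfl
@[simp] lemma inv_a (x : Heis) : x⁻¹.a = -x.a := rfl
@[simp] lemma inv_b (x : Heis) : x⁻¹.b = -x.b := rfl
@[simp] lemma inv_c (x : Heis) : x⁻¹.c = -x.c + x.a * x.b := rfl

instance : Group Heis where
  mul_assoc x y z := by ext <;> simp <;> ring
  one_mul x := by ext <;> simp
  mul_one x := by ext <;> simp
  inv_mul_cancel x := by ext <;> simp <;> ring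

lemma commutator_eq (x y : Heis) :
    ⁅x, y⁆ = ⟨0, 0, x.a * y.b - y.a * x.b⟩ := by
  rw [commutatorElement_def]; ext <;> simp <;> ring

lemma central_of (z : Heis) (ha : z.a = 0) (hb : z.b = 0) :
    z ∈ Subgroup.center Heis := by
  rw [Subgroup.mem_center_iff]
  intro g
  ext <;> simp [ha, hb] <;> ring

lemma lcs_two : Subgroup.lowerCentralSeries (⊤ : Subgroup Heis) 2 = ⊥ := by
  have h1 : Subgroup.lowerCentralSeries (⊤ : Subgroup Heis) 1 ≤ Subgroup.center Heis := by
    rw [Subgroup.lowerCentralSeries_one, commutator_def, Subgroup.commutator_le]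
    intro x _ y _
    rw [commutator_eq]
    exact central_of _ rfl rfl
  rw [eq_bot_iff]
  show Subgroup.lowerCentralSeries (⊤ : Subgroup Heis) (1 + 1) ≤ ⊥
  rw [Subgroup.lowerCentralSeries_succ]
  calc ⁅Subgroup.lowerCentralSeries (⊤ : Subgroup Heis) 1, (⊤ : Subgroup Heis)⁆
      ≤ ⁅Subgroup.center Heis, (⊤ : Subgroup Heis)⁆ :=
        Subgroup.commutator_mono h1 le_rfl
    _ ≤ ⊥ := by
        rw [Subgroup.commutator_le]
        intro x hx y _
        rw [commutatorElement_eq_one_iff_commute.mpr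
          (Subgroup.mem_center_iff.mp hx y).symm]
        exact Subgroup.one_mem _

/-- Embedding of `ℤ` as the center. -/
def iota : Multiplicative ℤ →* Heis where
  toFun n := ⟨0, 0, n.toAdd⟩
  map_one' := rfl
  map_mul' x y := by ext <;> simp

@[simp] lemma iota_c (n : Multiplicative ℤ) : (iota n).c = n.toAdd := rfl

end Heis

/-- The generator images in the Heisenberg group. -/
def heisGen (g g' : ℕ) : Fin g × Bool → Heis := fun p =>
  if p.2 then
    (if (p.1 : ℕ) < g' then ⟨0, 1, 0⟩ else if (p.1 : ℕ) = g' then ⟨0, -(g' : ℤ), 0⟩ else 1)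
  else
    (if (p.1 : ℕ) ≤ g' then ⟨1, 0, 0⟩ else 1)

/-- The exponent of the central generator produced by the `i`-th commutator. -/
def heisExp (g' : ℕ) (i : ℕ) : ℤ :=
  if i < g' then 1 else if i = g' then -(g' : ℤ) else 0

lemma heisGen_commutator (g g' : ℕ) (i : Fin g) :
    ⁅heisGen g g' (i, false), heisGen g g' (i, true)⁆ =
      Heis.iota (Multiplicative.ofAdd (heisExp g' i)) := by
  rw [Heis.commutator_eq]
  show (⟨0, 0, _⟩ : Heis) = ⟨0, 0, _⟩
  congr 1
  simp only [heisGen, heisExp, if_pos, if_neg, Bool.false_eq_true, if_false, if_true]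
  split_ifs with h1 h2 h3 h4 h5 <;> simp <;> omega

lemma heisExp_sum (g g' : ℕ) (hg' : g' < g) :
    ∑ i : Fin g, heisExp g' i = 0 := by
  have : ∀ i : Fin g, heisExp g' i =
      (if (i : ℕ) < g' then (1 : ℤ) else 0) + (if (i : ℕ) = g' then -(g' : ℤ) else 0) := by
    intro i
    unfold heisExp
    split_ifs <;> omega
  rw [Finset.sum_congr rfl fun i _ => this i, Finset.sum_add_distrib]
  rw [Fin.sum_univ_eq_sum_range (fun i => if i < g' then (1 : ℤ) else 0),
    Fin.sum_univ_eq_sum_range (fun i => if i = g' then -(g' : ℤ) else 0)]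
  rw [Finset.sum_ite_eq' (Finset.range g) g' (fun _ => -(g' : ℤ))]
  have hfil : (Finset.range g).filter (fun i => i < g') = Finset.range g' := by
    ext i; simp [Finset.mem_filter, Finset.mem_range]; omega
  rw [← Finset.sum_filter, hfil, Finset.sum_const]
  simp [Finset.mem_range.mpr hg']

lemma heisGen_rel (g g' : ℕ) (hg' : g' < g) :
    ∀ r ∈ surfaceRels g, FreeGroup.lift (heisGen g g') r = 1 := by
  intro r hr
  simp only [surfaceRels, Set.mem_singleton_iff] at hr
  subst hr
  rw [map_list_prod, List.map_ofFn]
  have : ((FreeGroup.lift (heisGen g g')) ∘ fun i : Fin g =>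
      ⁅FreeGroup.of (i, false), FreeGroup.of (i, true)⁆) =
      fun i : Fin g => Heis.iota (Multiplicative.ofAdd (heisExp g' i)) := by
    funext i
    simp only [Function.comp_apply, map_commutatorElement, FreeGroup.lift_apply_of]
    exact heisGen_commutator g g' i
  rw [this]
  have : (fun i : Fin g => Heis.iota (Multiplicative.ofAdd (heisExp g' i))) =
      Heis.iota ∘ fun i : Fin g => Multiplicative.ofAdd (heisExp g' i) := rfl
  rw [this, ← List.map_ofFn, ← map_list_prod, List.prod_ofFn]
  have : ∏ i : Fin g, Multiplicative.ofAdd (heisExp g' i) =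
      Multiplicative.ofAdd (∑ i : Fin g, heisExp g' i) := by
    rw [← ofAdd_sum]
  rw [this, heisExp_sum g g' hg']
  simp

/-- Let `g ≥ 2` and `1 ≤ g' < g`, and let `π_g` be the genus `g` surface
group.  Then `x = [a_1,b_1][a_2,b_2]⋯[a_{g'},b_{g'}]` does not lie in the third term
`γ_3(π_g)` of the lower central series (Mathlib's `lowerCentralSeries _ 2`); in
particular `x ≠ 1`. -/
theorem partial_commutator_product_not_in_gamma3 (g g' : ℕ) (hg : 2 ≤ g)
    (hg'1 : 1 ≤ g') (hg' : g' < g) :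
    (List.ofFn (fun i : Fin g' =>
        ⁅surfaceGen (Fin.castLE hg'.le i) false,
          surfaceGen (Fin.castLE hg'.le i) true⁆)).prod
      ∉ Subgroup.lowerCentralSeries (⊤ : Subgroup (SurfaceGroup g)) 2 := by
  intro hmem
  set φ : SurfaceGroup g →* Heis := PresentedGroup.toGroup (heisGen_rel g g' hg') with hφ
  have himg : φ ((List.ofFn (fun i : Fin g' =>
      ⁅surfaceGen (Fin.castLE hg'.le i) false,
        surfaceGen (Fin.castLE hg'.le i) true⁆)).prod) =
      Heis.iota (Multiplicative.ofAdd (g' : ℤ)) := by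
    rw [map_list_prod, List.map_ofFn]
    have : (φ ∘ fun i : Fin g' =>
        ⁅surfaceGen (Fin.castLE hg'.le i) false, surfaceGen (Fin.castLE hg'.le i) true⁆) =
        fun i : Fin g' => Heis.iota (Multiplicative.ofAdd (1 : ℤ)) := by
      funext i
      simp only [Function.comp_apply, map_commutatorElement]
      have h0 : ∀ c, φ (surfaceGen (Fin.castLE hg'.le i) c) =
          heisGen g g' (Fin.castLE hg'.le i, c) := fun c => PresentedGroup.toGroup.of _
      rw [h0, h0]
      rw [heisGen_commutator g g' (Fin.castLE hg'.le i)]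
      congr 2
      unfold heisExp
      rw [if_pos]
      exact lt_of_lt_of_le i.isLt le_rfl
    rw [this]
    have : (fun _ : Fin g' => Heis.iota (Multiplicative.ofAdd (1 : ℤ))) =
        Heis.iota ∘ fun _ : Fin g' => Multiplicative.ofAdd (1 : ℤ) := rfl
    rw [this, ← List.map_ofFn, ← map_list_prod, List.prod_ofFn]
    congr 1
    rw [← ofAdd_sum]
    simp
  have hbot : φ ((List.ofFn (fun i : Fin g' =>
      ⁅surfaceGen (Fin.castLE hg'.le i) false,
        surfaceGen (Fin.castLE hg'.le i) true⁆)).prod) ∈ Subgroup.lowerCentralSeries (⊤ : Subgroup Heis) 2 :=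
    Subgroup.lowerCentralSeries.map φ 2 (Subgroup.mem_map_of_mem φ hmem)
  rw [Heis.lcs_two, Subgroup.mem_bot, himg] at hbot
  have : ((g' : ℤ)) = 0 := by
    have := congrArg Heis.c hbot
    simpa using this
  omega
end
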